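/- arXiv:2501.14505 — 6 statements merged into one kernel-verified Lean document; each statement's English description precedes it below -/
import Mathlib

section
/- Let A and B be n×n complex matrices whose numerical ranges are contained in the sector S_α for some α ∈ [0, π/2), and let q ∈ ℂ with 0 < |q| ≤ 1. Then |q|²·w_q(AB) ≤ sec²(α)·w_q(A)·w_q(B). -/
open ComplexConjugate

noncomputable def qNumRadius {H : Type*} [NormedAddCommGroup H] [InnerProductSpace ℂ H]
    (q : ℂ) (T : H →L[ℂ] H) : ℝ :=
  sSup {r : ℝ | ∃ x y : H, ‖x‖ = 1 ∧ ‖y‖ = 1 ∧ (inner ℂ y x : ℂ) = q ∧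
    r = ‖(inner ℂ y (T x) : ℂ)‖}

noncomputable def numRadius {H : Type*} [NormedAddCommGroup H] [InnerProductSpace ℂ H]
    (T : H →L[ℂ] H) : ℝ :=
  sSup {r : ℝ | ∃ x : H, ‖x‖ = 1 ∧ r = ‖(inner ℂ x (T x) : ℂ)‖}

/-- The continuous linear map on Euclidean space associated to a matrix. -/
noncomputable def mCLM {n : ℕ} (A : Matrix (Fin n) (Fin n) ℂ) :
    EuclideanSpace ℂ (Fin n) →L[ℂ] EuclideanSpace ℂ (Fin n) :=
  Matrix.toEuclideanCLM (𝕜 := ℂ) A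

/-- The numerical range of `A` is contained in the sector `S_α`. -/
def InSector {n : ℕ} (α : ℝ) (A : Matrix (Fin n) (Fin n) ℂ) : Prop :=
  ∀ x : EuclideanSpace ℂ (Fin n), ‖x‖ = 1 →
    0 < (inner ℂ x (mCLM A x) : ℂ).re ∧
      |(inner ℂ x (mCLM A x) : ℂ).im| ≤ Real.tan α * (inner ℂ x (mCLM A x) : ℂ).re

section Aux

variable {H : Type*} [NormedAddCommGroup H] [InnerProductSpace ℂ H]

/-- Cauchy–Schwarz for a positive semidefinite sesquilinear form given by an operator. -/
lemma semiCS (M : H →L[ℂ] H)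
    (hsymm : ∀ x y : H, (inner ℂ x (M y) : ℂ) = conj (inner ℂ y (M x) : ℂ))
    (hpos : ∀ x : H, 0 ≤ (inner ℂ x (M x) : ℂ).re) (x y : H) :
    ‖(inner ℂ y (M x) : ℂ)‖ ≤ Real.sqrt ((inner ℂ x (M x) : ℂ).re * (inner ℂ y (M y) : ℂ).re) := by
  let C : PreInnerProductSpace.Core ℂ H :=
    { inner := fun u v => (inner ℂ u (M v) : ℂ)
      conj_inner_symm := fun u v => (hsymm u v).symm
      re_inner_nonneg := hpos
      add_left := fun u v w => by simp [inner_add_left]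
      smul_left := fun u v r => by simp [inner_smul_left, mul_comm] }
  have h := @InnerProductSpace.Core.inner_mul_inner_self_le ℂ H _ _ _ C x y
  have hxy : ‖(inner ℂ x (M y) : ℂ)‖ = ‖(inner ℂ y (M x) : ℂ)‖ := by
    rw [hsymm x y, RCLike.norm_conj]
  have h2 : ‖(inner ℂ y (M x) : ℂ)‖ ^ 2 ≤ (inner ℂ x (M x) : ℂ).re * (inner ℂ y (M y) : ℂ).re := by
    have h' : ‖(inner ℂ x (M y) : ℂ)‖ * ‖(inner ℂ y (M x) : ℂ)‖
        ≤ (inner ℂ x (M x) : ℂ).re * (inner ℂ y (M y) : ℂ).re := h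
    rw [hxy] at h'; nlinarith [norm_nonneg (inner ℂ y (M x) : ℂ)]
  calc ‖(inner ℂ y (M x) : ℂ)‖ = Real.sqrt (‖(inner ℂ y (M x) : ℂ)‖ ^ 2) := by
        rw [Real.sqrt_sq (norm_nonneg _)]
    _ ≤ _ := Real.sqrt_le_sqrt h2

lemma sqrtCS {a b c d : ℝ} (ha : 0 ≤ a) (hb : 0 ≤ b) (hc : 0 ≤ c) (hd : 0 ≤ d) :
    Real.sqrt (a*b) + Real.sqrt (c*d) ≤ Real.sqrt (a+c) * Real.sqrt (b+d) := by
  rw [← Real.sqrt_mul (by positivity)]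
  rw [show (a+c)*(b+d) = a*b + c*d + (a*d + c*b) by ring]
  have h1 : Real.sqrt (a*b) * Real.sqrt (c*d) = Real.sqrt (a*d) * Real.sqrt (c*b) := by
    rw [← Real.sqrt_mul (by positivity), ← Real.sqrt_mul (by positivity)]; ring_nf
  have h2 := sq_nonneg (Real.sqrt (a*d) - Real.sqrt (c*b))
  have e1 := Real.sq_sqrt (mul_nonneg ha hd)
  have e2 := Real.sq_sqrt (mul_nonneg hc hb)
  have e3 := Real.sq_sqrt (mul_nonneg ha hb)
  have e4 := Real.sq_sqrt (mul_nonneg hc hd)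
  rw [show Real.sqrt (a*b) + Real.sqrt (c*d)
      = Real.sqrt ((Real.sqrt (a*b) + Real.sqrt (c*d))^2) from
      (Real.sqrt_sq (by positivity)).symm]
  apply Real.sqrt_le_sqrt
  nlinarith [Real.sqrt_nonneg (a*b), Real.sqrt_nonneg (c*d)]

/-- Scaling the sector condition to all vectors, in the convenient form. -/
lemma sector_scale (T : H →L[ℂ] H) {α : ℝ} (hca : 0 < Real.cos α)
    (hT : ∀ x : H, ‖x‖ = 1 → 0 ≤ (inner ℂ x (T x) : ℂ).re ∧
      |(inner ℂ x (T x) : ℂ).im| ≤ Real.tan α * (inner ℂ x (T x) : ℂ).re)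
    (u : H) : 0 ≤ (inner ℂ u (T u) : ℂ).re ∧
      Real.cos α * |(inner ℂ u (T u) : ℂ).im| ≤ Real.sin α * (inner ℂ u (T u) : ℂ).re := by
  have key : ∀ v : H, ‖v‖ = 1 → 0 ≤ (inner ℂ v (T v) : ℂ).re ∧
      Real.cos α * |(inner ℂ v (T v) : ℂ).im| ≤ Real.sin α * (inner ℂ v (T v) : ℂ).re := by
    intro v hv
    obtain ⟨h1, h2⟩ := hT v hv
    refine ⟨h1, ?_⟩
    rw [Real.tan_eq_sin_div_cos] at h2
    have := mul_le_mul_of_nonneg_left h2 hca.le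
    calc Real.cos α * |(inner ℂ v (T v) : ℂ).im|
        ≤ Real.cos α * (Real.sin α / Real.cos α * (inner ℂ v (T v) : ℂ).re) := this
      _ = Real.sin α * (inner ℂ v (T v) : ℂ).re := by field_simp
  rcases eq_or_ne u 0 with rfl | hu
  · simp
  · have hnu : (0:ℝ) < ‖u‖ := norm_pos_iff.2 hu
    set v : H := ((‖u‖ : ℂ))⁻¹ • u with hv
    have hv1 : ‖v‖ = 1 := by
      rw [hv, norm_smul]
      simp [norm_inv, hnu.ne']
    have hscale : (inner ℂ u (T u) : ℂ) = ((‖u‖^2 : ℝ) : ℂ) * (inner ℂ v (T v) : ℂ) := by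
      rw [hv]
      simp only [map_smul, inner_smul_left, inner_smul_right]
      rw [show (starRingEnd ℂ) ((‖u‖ : ℂ))⁻¹ = ((‖u‖ : ℂ))⁻¹ by
        simp [Complex.conj_inv, Complex.conj_ofReal]]
      have : ((‖u‖ : ℂ)) ≠ 0 := by exact_mod_cast hnu.ne'
      field_simp
      push_cast; ring
    obtain ⟨h1, h2⟩ := key v hv1
    constructor
    · rw [hscale]
      simp only [Complex.re_ofReal_mul]
      positivity
    · rw [hscale]
      simp only [Complex.re_ofReal_mul, Complex.im_ofReal_mul]
      rw [abs_mul, abs_of_nonneg (by positivity : (0:ℝ) ≤ ‖u‖^2)]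
      calc Real.cos α * (‖u‖^2 * |(inner ℂ v (T v) : ℂ).im|)
          = ‖u‖^2 * (Real.cos α * |(inner ℂ v (T v) : ℂ).im|) := by ring
        _ ≤ ‖u‖^2 * (Real.sin α * (inner ℂ v (T v) : ℂ).re) := by
            apply mul_le_mul_of_nonneg_left h2 (by positivity)
        _ = Real.sin α * (‖u‖^2 * (inner ℂ v (T v) : ℂ).re) := by ring

end Aux

section Aux2

variable {H : Type*} [NormedAddCommGroup H] [InnerProductSpace ℂ H] [CompleteSpace H]

/-- The key sector Cauchy-Schwarz bound. -/
lemma sectorBound (T : H →L[ℂ] H) {α : ℝ} (hα0 : 0 ≤ α) (hα : α < Real.pi / 2)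
    (hT : ∀ x : H, ‖x‖ = 1 → 0 ≤ (inner ℂ x (T x) : ℂ).re ∧
      |(inner ℂ x (T x) : ℂ).im| ≤ Real.tan α * (inner ℂ x (T x) : ℂ).re)
    (x y : H) :
    Real.cos α * ‖(inner ℂ y (T x) : ℂ)‖
      ≤ Real.sqrt ((inner ℂ x (T x) : ℂ).re * (inner ℂ y (T y) : ℂ).re) := by
  have hca : 0 < Real.cos α := Real.cos_pos_of_mem_Ioo
    ⟨lt_of_lt_of_le (by linarith [Real.pi_pos]) hα0, hα⟩
  have hsec := sector_scale T hca hT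
  rcases eq_or_lt_of_le hα0 with h0 | hsa
  · -- α = 0 : T is symmetric positive
    subst h0
    have him : ∀ u : H, (inner ℂ u (T u) : ℂ).im = 0 := by
      intro u
      have := (hsec u).2
      simp only [Real.sin_zero, Real.cos_zero, one_mul, zero_mul] at this
      exact abs_eq_zero.1 (le_antisymm this (abs_nonneg _))
    have hsymm : ∀ u v : H, (inner ℂ u (T v) : ℂ) = conj (inner ℂ v (T u) : ℂ) := by
      have him' : ∀ v : H, (inner ℂ v ((T : H →ₗ[ℂ] H) v) : ℂ).im = 0 := him
      have hsym : (T : H →ₗ[ℂ] H).IsSymmetric := by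
        rw [LinearMap.isSymmetric_iff_inner_map_self_real]
        intro v
        rw [Complex.conj_eq_iff_im]
        have e : (inner ℂ ((T : H →ₗ[ℂ] H) v) v : ℂ)
            = conj (inner ℂ v ((T : H →ₗ[ℂ] H) v) : ℂ) := (inner_conj_symm _ _).symm
        rw [e, Complex.conj_im, him' v, neg_zero]
      intro u v
      rw [inner_conj_symm]
      exact (hsym u v).symm
    simpa using semiCS T hsymm (fun u => (hsec u).1) x y
  · -- α > 0
    set sa := Real.sin α with hsa_def
    set ca := Real.cos α with hca_def
    have hsa0 : 0 < sa := Real.sin_pos_of_pos_of_lt_pi hsa (by linarith [Real.pi_pos])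
    set c' : ℂ := ⟨sa / 2, ca / 2⟩ with hc'
    set Tad := ContinuousLinearMap.adjoint T with hTad
    set Mp : H →L[ℂ] H := (conj c') • T + c' • Tad with hMp
    set Mm : H →L[ℂ] H := c' • T + (conj c') • Tad with hMm
    have hinner_p : ∀ u v : H, (inner ℂ u (Mp v) : ℂ)
        = conj c' * (inner ℂ u (T v) : ℂ) + c' * (inner ℂ (T u) v : ℂ) := by
      intro u v
      simp [hMp, inner_add_right, inner_smul_right, hTad,
        ContinuousLinearMap.adjoint_inner_right]
    have hinner_m : ∀ u v : H, (inner ℂ u (Mm v) : ℂ)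
        = c' * (inner ℂ u (T v) : ℂ) + conj c' * (inner ℂ (T u) v : ℂ) := by
      intro u v
      simp [hMm, inner_add_right, inner_smul_right, hTad,
        ContinuousLinearMap.adjoint_inner_right]
    -- quadratic forms
    have hquad : ∀ (u : H), (inner ℂ u (Mp u) : ℂ)
          = ((sa * (inner ℂ u (T u) : ℂ).re + ca * (inner ℂ u (T u) : ℂ).im : ℝ) : ℂ)
        ∧ (inner ℂ u (Mm u) : ℂ)
          = ((sa * (inner ℂ u (T u) : ℂ).re - ca * (inner ℂ u (T u) : ℂ).im : ℝ) : ℂ) := by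
      intro u
      have hconj : (inner ℂ (T u) u : ℂ) = conj (inner ℂ u (T u) : ℂ) :=
        (inner_conj_symm (T u) u).symm
      have hre' : (inner ℂ (T u) u : ℂ).re = (inner ℂ u (T u) : ℂ).re := by
        rw [hconj, Complex.conj_re]
      have him' : (inner ℂ (T u) u : ℂ).im = -(inner ℂ u (T u) : ℂ).im := by
        rw [hconj, Complex.conj_im]
      constructor
      · rw [hinner_p u u]
        apply Complex.ext <;>
          simp only [Complex.add_re, Complex.add_im, Complex.mul_re, Complex.mul_im,
            Complex.conj_re, Complex.conj_im, Complex.ofReal_re, Complex.ofReal_im,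
            hc', hre', him'] <;> ring
      · rw [hinner_m u u]
        apply Complex.ext <;>
          simp only [Complex.add_re, Complex.add_im, Complex.mul_re, Complex.mul_im,
            Complex.conj_re, Complex.conj_im, Complex.ofReal_re, Complex.ofReal_im,
            hc', hre', him'] <;> ring
    have hsymm_p : ∀ u v : H, (inner ℂ u (Mp v) : ℂ) = conj (inner ℂ v (Mp u) : ℂ) := by
      intro u v
      rw [hinner_p u v, hinner_p v u]
      rw [map_add, map_mul, map_mul, Complex.conj_conj, inner_conj_symm, inner_conj_symm]
      ring
    have hsymm_m : ∀ u v : H, (inner ℂ u (Mm v) : ℂ) = conj (inner ℂ v (Mm u) : ℂ) := by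
      intro u v
      rw [hinner_m u v, hinner_m v u]
      rw [map_add, map_mul, map_mul, Complex.conj_conj, inner_conj_symm, inner_conj_symm]
      ring
    have hpos_p : ∀ u : H, 0 ≤ (inner ℂ u (Mp u) : ℂ).re := by
      intro u
      rw [(hquad u).1, Complex.ofReal_re]
      obtain ⟨h1, h2⟩ := hsec u
      have h := mul_le_mul_of_nonneg_left (neg_abs_le (inner ℂ u (T u) : ℂ).im) hca.le
      rw [mul_neg] at h; linarith
    have hpos_m : ∀ u : H, 0 ≤ (inner ℂ u (Mm u) : ℂ).re := by
      intro u
      rw [(hquad u).2, Complex.ofReal_re]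
      obtain ⟨h1, h2⟩ := hsec u
      have h := mul_le_mul_of_nonneg_left (le_abs_self (inner ℂ u (T u) : ℂ).im) hca.le
      linarith
    -- the decomposition
    set a : ℂ := ⟨1/(2*sa), 1/(2*ca)⟩ with ha
    have hdecomp : ∀ u v : H, (inner ℂ v (T u) : ℂ)
        = a * (inner ℂ v (Mp u) : ℂ) + conj a * (inner ℂ v (Mm u) : ℂ) := by
      intro u v
      rw [hinner_p v u, hinner_m v u]
      have e1 : a * conj c' + conj a * c' = 1 := by
        apply Complex.ext <;>
          simp [ha, hc', Complex.mul_re, Complex.mul_im, Complex.conj_re, Complex.conj_im] <;>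
          field_simp <;> ring
      have e2 : a * c' + conj a * conj c' = 0 := by
        apply Complex.ext <;>
          simp [ha, hc', Complex.mul_re, Complex.mul_im, Complex.conj_re, Complex.conj_im] <;>
          field_simp <;> ring
      calc (inner ℂ v (T u) : ℂ)
          = (a * conj c' + conj a * c') * (inner ℂ v (T u) : ℂ)
            + (a * c' + conj a * conj c') * (inner ℂ (T v) u : ℂ) := by
            rw [e1, e2]; ring
        _ = _ := by ring
    have hnorma : ‖a‖ = 1 / (2 * sa * ca) := by
      rw [Complex.norm_def, Complex.normSq_mk]
      rw [show 1/(2*sa) * (1/(2*sa)) + 1/(2*ca) * (1/(2*ca)) = (1/(2*sa*ca))^2 by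
        field_simp
        nlinarith [Real.sin_sq_add_cos_sq α]]
      exact Real.sqrt_sq (by positivity)
    -- put it together
    set zx := (inner ℂ x (T x) : ℂ) with hzx
    set zy := (inner ℂ y (T y) : ℂ) with hzy
    have bp := semiCS Mp hsymm_p hpos_p x y
    have bm := semiCS Mm hsymm_m hpos_m x y
    rw [(hquad x).1, (hquad y).1] at bp
    rw [(hquad x).2, (hquad y).2] at bm
    simp only [Complex.ofReal_re] at bp bm
    have hnorm : ‖(inner ℂ y (T x) : ℂ)‖
        ≤ ‖a‖ * (‖(inner ℂ y (Mp x) : ℂ)‖ + ‖(inner ℂ y (Mm x) : ℂ)‖) := by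
      rw [hdecomp x y]
      calc ‖a * (inner ℂ y (Mp x) : ℂ) + conj a * (inner ℂ y (Mm x) : ℂ)‖
          ≤ ‖a * (inner ℂ y (Mp x) : ℂ)‖ + ‖conj a * (inner ℂ y (Mm x) : ℂ)‖ := norm_add_le _ _
        _ = ‖a‖ * ‖(inner ℂ y (Mp x) : ℂ)‖ + ‖a‖ * ‖(inner ℂ y (Mm x) : ℂ)‖ := by
            rw [norm_mul, norm_mul, RCLike.norm_conj]
        _ = _ := by ring
    have hsum : ‖(inner ℂ y (Mp x) : ℂ)‖ + ‖(inner ℂ y (Mm x) : ℂ)‖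
        ≤ 2 * sa * Real.sqrt (zx.re * zy.re) := by
      have step : ‖(inner ℂ y (Mp x) : ℂ)‖ + ‖(inner ℂ y (Mm x) : ℂ)‖
          ≤ Real.sqrt ((sa * zx.re + ca * zx.im) * (sa * zy.re + ca * zy.im))
            + Real.sqrt ((sa * zx.re - ca * zx.im) * (sa * zy.re - ca * zy.im)) :=
        add_le_add bp bm
      refine step.trans ?_
      obtain ⟨hx1, hx2⟩ := hsec x
      obtain ⟨hy1, hy2⟩ := hsec y
      have ex1 : 0 ≤ sa * zx.re + ca * zx.im := by
        have h := mul_le_mul_of_nonneg_left (neg_abs_le zx.im) hca.le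
        rw [mul_neg] at h; linarith
      have ex2 : 0 ≤ sa * zx.re - ca * zx.im := by
        have h := mul_le_mul_of_nonneg_left (le_abs_self zx.im) hca.le
        linarith
      have ey1 : 0 ≤ sa * zy.re + ca * zy.im := by
        have h := mul_le_mul_of_nonneg_left (neg_abs_le zy.im) hca.le
        rw [mul_neg] at h; linarith
      have ey2 : 0 ≤ sa * zy.re - ca * zy.im := by
        have h := mul_le_mul_of_nonneg_left (le_abs_self zy.im) hca.le
        linarith
      have hcs := sqrtCS ex1 ey1 ex2 ey2
      refine hcs.trans_eq ?_
      rw [show sa * zx.re + ca * zx.im + (sa * zx.re - ca * zx.im) = (2 * sa) * zx.re by ring]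
      rw [show sa * zy.re + ca * zy.im + (sa * zy.re - ca * zy.im) = (2 * sa) * zy.re by ring]
      rw [Real.sqrt_mul (by positivity) zx.re, Real.sqrt_mul (by positivity) zy.re]
      rw [Real.sqrt_mul hx1]
      have hss : Real.sqrt (2*sa) * Real.sqrt (2*sa) = 2*sa := Real.mul_self_sqrt (by positivity)
      calc Real.sqrt (2*sa) * Real.sqrt zx.re * (Real.sqrt (2*sa) * Real.sqrt zy.re)
          = (Real.sqrt (2*sa) * Real.sqrt (2*sa)) * (Real.sqrt zx.re * Real.sqrt zy.re) := by
            ring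
        _ = 2 * sa * (Real.sqrt zx.re * Real.sqrt zy.re) := by rw [hss]
    calc ca * ‖(inner ℂ y (T x) : ℂ)‖
        ≤ ca * (‖a‖ * (‖(inner ℂ y (Mp x) : ℂ)‖ + ‖(inner ℂ y (Mm x) : ℂ)‖)) := by
          apply mul_le_mul_of_nonneg_left hnorm hca.le
      _ ≤ ca * (‖a‖ * (2 * sa * Real.sqrt (zx.re * zy.re))) := by
          apply mul_le_mul_of_nonneg_left _ hca.le
          apply mul_le_mul_of_nonneg_left hsum (norm_nonneg a)
      _ = Real.sqrt (zx.re * zy.re) := by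
          rw [hnorma]
          field_simp

lemma exists_unit_orth {q : ℂ}
    (hex : ∃ x₀ y₀ : H, ‖x₀‖ = 1 ∧ ‖y₀‖ = 1 ∧ (inner ℂ y₀ x₀ : ℂ) = q)
    (hq : ‖q‖ < 1) (x : H) (hx : ‖x‖ = 1) :
    ∃ v : H, ‖v‖ = 1 ∧ (inner ℂ v x : ℂ) = 0 := by
  by_contra hcon
  push_neg at hcon
  have hnz : ∀ w : H, (inner ℂ w x : ℂ) = 0 → w = 0 := by
    intro w hw
    by_contra hw0
    have hnw : (0:ℝ) < ‖w‖ := norm_pos_iff.2 hw0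
    have h1 : ‖((‖w‖ : ℂ))⁻¹ • w‖ = 1 := by
      rw [norm_smul]; simp [hnw.ne']
    have h2 : (inner ℂ (((‖w‖ : ℂ))⁻¹ • w) x : ℂ) = 0 := by
      rw [inner_smul_left, hw, mul_zero]
    exact hcon _ h1 h2
  have hxx : (inner ℂ x x : ℂ) = 1 := by
    rw [inner_self_eq_norm_sq_to_K, hx]; norm_num
  have hspan : ∀ w : H, w = (inner ℂ x w : ℂ) • x := by
    intro w
    have h0 : (inner ℂ (w - (inner ℂ x w : ℂ) • x) x : ℂ) = 0 := by
      rw [inner_sub_left, inner_smul_left]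
      rw [← inner_conj_symm x w, Complex.conj_conj, hxx, mul_one, sub_self]
    have := hnz _ h0
    rw [sub_eq_zero] at this
    exact this
  obtain ⟨x₀, y₀, hx₀, hy₀, hq₀⟩ := hex
  have e1 : ‖(inner ℂ x x₀ : ℂ)‖ = 1 := by
    have := hspan x₀
    rw [← hx₀]
    conv_rhs => rw [this]
    rw [norm_smul, hx, mul_one]
  have e2 : ‖(inner ℂ x y₀ : ℂ)‖ = 1 := by
    have := hspan y₀
    rw [← hy₀]
    conv_rhs => rw [this]
    rw [norm_smul, hx, mul_one]
  have : q = conj (inner ℂ x y₀ : ℂ) * (inner ℂ x x₀ : ℂ) := by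
    rw [← hq₀]
    conv_lhs => rw [hspan x₀, hspan y₀]
    rw [inner_smul_left, inner_smul_right, hxx, mul_one]
  rw [this, norm_mul, Complex.norm_conj, e1, e2, mul_one] at hq
  exact absurd hq (lt_irrefl 1)

lemma qnr_bddAbove (q : ℂ) (T : H →L[ℂ] H) :
    ∀ r ∈ {r : ℝ | ∃ x y : H, ‖x‖ = 1 ∧ ‖y‖ = 1 ∧ (inner ℂ y x : ℂ) = q ∧
      r = ‖(inner ℂ y (T x) : ℂ)‖}, r ≤ ‖T‖ := by
  rintro r ⟨u, v, hu, hv, -, rfl⟩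
  calc ‖(inner ℂ v (T u) : ℂ)‖ ≤ ‖v‖ * ‖T u‖ := norm_inner_le_norm v (T u)
    _ ≤ 1 * (‖T‖ * ‖u‖) := by
        rw [hv]; exact mul_le_mul_of_nonneg_left (T.le_opNorm u) zero_le_one
    _ = ‖T‖ := by rw [hu]; ring

lemma qnr_le_norm (q : ℂ) (T : H →L[ℂ] H) : qNumRadius q T ≤ ‖T‖ :=
  Real.sSup_le (qnr_bddAbove q T) (norm_nonneg T)

lemma qnr_lower {q : ℂ} (T : H →L[ℂ] H)
    (hex : ∃ x₀ y₀ : H, ‖x₀‖ = 1 ∧ ‖y₀‖ = 1 ∧ (inner ℂ y₀ x₀ : ℂ) = q)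
    (hq1 : ‖q‖ ≤ 1) (x : H) (hx : ‖x‖ = 1) :
    ‖q‖ * ‖(inner ℂ x (T x) : ℂ)‖ ≤ qNumRadius q T := by
  classical
  have hxx : (inner ℂ x x : ℂ) = 1 := by
    rw [inner_self_eq_norm_sq_to_K, hx]; norm_num
  obtain ⟨y, hy1, hyx, hga⟩ : ∃ y : H, ‖y‖ = 1 ∧ (inner ℂ y x : ℂ) = q ∧
      ‖q‖ * ‖(inner ℂ x (T x) : ℂ)‖ ≤ ‖(inner ℂ y (T x) : ℂ)‖ := by
    rcases eq_or_lt_of_le hq1 with heq | hlt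
    · -- |q| = 1
      refine ⟨conj q • x, ?_, ?_, ?_⟩
      · rw [norm_smul, hx, mul_one, Complex.norm_conj, heq]
      · rw [inner_smul_left, Complex.conj_conj, hxx, mul_one]
      · rw [inner_smul_left, Complex.conj_conj, norm_mul]
    · -- |q| < 1
      obtain ⟨v, hv1, hvx⟩ := exists_unit_orth hex hlt x hx
      set z : ℂ := inner ℂ x (T x) with hz
      set d : ℂ := inner ℂ v (T x) with hd
      set t : ℝ := Real.sqrt (1 - ‖q‖ ^ 2) with ht
      have ht0 : 0 ≤ t := Real.sqrt_nonneg _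
      have ht2 : t ^ 2 = 1 - ‖q‖ ^ 2 := by
        rw [ht, Real.sq_sqrt]
        nlinarith [norm_nonneg q]
      set p : ℂ := if q * z = 0 then 1 else (q * z) / ‖q * z‖ with hp
      set s : ℂ := if d = 0 then 1 else conj (d / ‖d‖) with hs
      have hpabs : ‖p‖ = 1 := by
        rw [hp]
        split_ifs with h
        · simp
        · rw [norm_div, Complex.norm_real, norm_norm,
            div_self (norm_ne_zero_iff.mpr h)]
      have hsabs : ‖s‖ = 1 := by
        rw [hs]
        split_ifs with h
        · simp
        · rw [Complex.norm_conj, norm_div, Complex.norm_real,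
            norm_norm, div_self (norm_ne_zero_iff.mpr h)]
      have hsd : s * d = (‖d‖ : ℂ) := by
        rw [hs]
        split_ifs with h
        · rw [h]; simp
        · rw [map_div₀, Complex.conj_ofReal]
          rw [div_mul_eq_mul_div, mul_comm, Complex.mul_conj]
          rw [Complex.normSq_eq_norm_sq]
          have : (‖d‖ : ℂ) ≠ 0 := by
            simp [norm_ne_zero_iff.mpr h]
          field_simp
          push_cast; ring
      set b : ℂ := (t : ℂ) * conj p * conj s with hb
      have hbabs : ‖b‖ = t := by
        rw [hb, norm_mul, norm_mul, Complex.norm_conj, Complex.norm_conj, hpabs, hsabs,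
          Complex.norm_of_nonneg ht0, mul_one, mul_one]
      have hconjb : conj b = (t : ℂ) * p * s := by
        rw [hb]; simp [Complex.conj_ofReal]
      refine ⟨conj q • x + b • v, ?_, ?_, ?_⟩
      · have hxv : (inner ℂ x v : ℂ) = 0 := by
          rw [← inner_conj_symm, hvx, map_zero]
        have horth : (inner ℂ (conj q • x) (b • v) : ℂ) = 0 := by
          rw [inner_smul_left, inner_smul_right, hxv]
          simp
        have hsq : ‖conj q • x + b • v‖ ^ 2 = 1 := by
          rw [norm_add_sq (𝕜 := ℂ), horth]
          simp only [map_zero, mul_zero, add_zero]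
          rw [norm_smul, norm_smul, hx, hv1, mul_one, mul_one]
          rw [Complex.norm_conj, hbabs]
          linarith [ht2]
        have : ‖conj q • x + b • v‖ = Real.sqrt (‖conj q • x + b • v‖ ^ 2) :=
          (Real.sqrt_sq (norm_nonneg _)).symm
        rw [this, hsq, Real.sqrt_one]
      · rw [inner_add_left, inner_smul_left, inner_smul_left, Complex.conj_conj, hxx,
          mul_one, hvx, mul_zero, add_zero]
      · have hval : (inner ℂ (conj q • x + b • v) (T x) : ℂ)
            = q * z + (t : ℂ) * p * (‖d‖ : ℂ) := by
          rw [inner_add_left, inner_smul_left, inner_smul_left, Complex.conj_conj, hconjb,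
            ← hz, ← hd]
          rw [show (t : ℂ) * p * s * d = (t : ℂ) * p * (s * d) by ring, hsd]
        rw [hval, ← norm_mul]
        by_cases hqz : q * z = 0
        · rw [hqz, norm_zero]
          exact norm_nonneg _
        · have hpval : p = (q * z) / ‖q * z‖ := by rw [hp, if_neg hqz]
          have habs : (‖q*z‖ : ℂ) ≠ 0 :=
            Complex.ofReal_ne_zero.2 (norm_ne_zero_iff.mpr hqz)
          have hqzp : p * (‖q*z‖ : ℂ) = q * z := by
            rw [hpval, div_mul_cancel₀ _ habs]
          have key : q * z + (t : ℂ) * p * (‖d‖ : ℂ)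
              = p * ((‖q*z‖ + t * ‖d‖ : ℝ) : ℂ) := by
            push_cast
            rw [mul_add, hqzp]
            ring
          rw [key, norm_mul p, hpabs, one_mul,
            Complex.norm_of_nonneg (add_nonneg (norm_nonneg _)
              (mul_nonneg ht0 (norm_nonneg d)))]
          linarith [mul_nonneg ht0 (norm_nonneg d)]
  refine le_trans hga (le_csSup ⟨‖T‖, qnr_bddAbove q T⟩ ?_)
  exact ⟨x, y, hx, hy1, hyx, rfl⟩

lemma opnorm_le_of_inner (T : H →L[ℂ] H) {C : ℝ} (hC : 0 ≤ C)
    (h : ∀ x y : H, ‖x‖ = 1 → ‖y‖ = 1 → ‖(inner ℂ y (T x) : ℂ)‖ ≤ C) : ‖T‖ ≤ C := by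
  apply ContinuousLinearMap.opNorm_le_bound _ hC
  intro x
  rcases eq_or_ne x 0 with rfl | hx
  · simp
  have hnx : (0:ℝ) < ‖x‖ := norm_pos_iff.2 hx
  set u : H := ((‖x‖ : ℂ))⁻¹ • x with hu_def
  have hu : ‖u‖ = 1 := by rw [hu_def, norm_smul]; simp [hnx.ne']
  have hTu : ‖T x‖ = ‖x‖ * ‖T u‖ := by
    rw [hu_def, map_smul, norm_smul, norm_inv,
      Complex.norm_of_nonneg hnx.le, ← mul_assoc, mul_inv_cancel₀ hnx.ne', one_mul]
  rcases eq_or_ne (T u) 0 with h0 | h0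
  · rw [hTu, h0, norm_zero, mul_zero]
    positivity
  have hnTu : (0:ℝ) < ‖T u‖ := norm_pos_iff.2 h0
  set v : H := ((‖T u‖ : ℂ))⁻¹ • (T u) with hv_def
  have hv : ‖v‖ = 1 := by rw [hv_def, norm_smul]; simp [hnTu.ne']
  have hiv : (inner ℂ v (T u) : ℂ) = ((‖T u‖ : ℝ) : ℂ) := by
    rw [hv_def, inner_smul_left]
    rw [inner_self_eq_norm_sq_to_K]
    rw [show (starRingEnd ℂ) (((‖T u‖ : ℂ))⁻¹) = ((‖T u‖ : ℂ))⁻¹ by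
      simp [Complex.conj_inv, Complex.conj_ofReal]]
    have : ((‖T u‖ : ℂ)) ≠ 0 := by exact_mod_cast hnTu.ne'
    field_simp
    exact rfl
  have := h u v hu hv
  rw [hiv] at this
  rw [Complex.norm_of_nonneg hnTu.le] at this
  rw [hTu, mul_comm]
  exact mul_le_mul_of_nonneg_right this hnx.le

end Aux2

theorem stmt3 {n : ℕ} (A B : Matrix (Fin n) (Fin n) ℂ) (α : ℝ)
    (hα : 0 ≤ α ∧ α < Real.pi / 2) (hA : InSector α A) (hB : InSector α B)
    (q : ℂ) (hq : 0 < ‖q‖) (hq1 : ‖q‖ ≤ 1) :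
    ‖q‖ ^ 2 * qNumRadius q (mCLM (A * B)) ≤
      (Real.cos α)⁻¹ ^ 2 * qNumRadius q (mCLM A) * qNumRadius q (mCLM B) := by
  obtain ⟨hα0, hα2⟩ := hα
  have hca : 0 < Real.cos α := Real.cos_pos_of_mem_Ioo
    ⟨lt_of_lt_of_le (by linarith [Real.pi_pos]) hα0, hα2⟩
  by_cases hex : ∃ x y : EuclideanSpace ℂ (Fin n),
      ‖x‖ = 1 ∧ ‖y‖ = 1 ∧ (inner ℂ y x : ℂ) = q
  · -- main case
    set T := mCLM A with hT_def
    set S := mCLM B with hS_def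
    set wA := qNumRadius q T with hwA
    set wB := qNumRadius q S with hwB
    have hsecA : ∀ x : EuclideanSpace ℂ (Fin n), ‖x‖ = 1 →
        0 ≤ (inner ℂ x (T x) : ℂ).re ∧
          |(inner ℂ x (T x) : ℂ).im| ≤ Real.tan α * (inner ℂ x (T x) : ℂ).re :=
      fun x hx => ⟨(hA x hx).1.le, (hA x hx).2⟩
    have hsecB : ∀ x : EuclideanSpace ℂ (Fin n), ‖x‖ = 1 →
        0 ≤ (inner ℂ x (S x) : ℂ).re ∧
          |(inner ℂ x (S x) : ℂ).im| ≤ Real.tan α * (inner ℂ x (S x) : ℂ).re :=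
      fun x hx => ⟨(hB x hx).1.le, (hB x hx).2⟩
    have hwA0 : 0 ≤ wA := by
      obtain ⟨x₀, y₀, hx₀, hy₀, hq₀⟩ := id hex
      have := qnr_lower T hex hq1 x₀ hx₀
      have h0 : 0 ≤ ‖q‖ * ‖(inner ℂ x₀ (T x₀) : ℂ)‖ := by positivity
      linarith
    have hwB0 : 0 ≤ wB := by
      obtain ⟨x₀, y₀, hx₀, hy₀, hq₀⟩ := id hex
      have := qnr_lower S hex hq1 x₀ hx₀
      have h0 : 0 ≤ ‖q‖ * ‖(inner ℂ x₀ (S x₀) : ℂ)‖ := by positivity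
      linarith
    -- operator norm bounds
    have hopA : ‖T‖ ≤ (Real.cos α)⁻¹ * (wA / ‖q‖) := by
      apply opnorm_le_of_inner T (by positivity)
      intro x y hx hy
      have h1 := sectorBound T hα0 hα2 hsecA x y
      have hrex : (inner ℂ x (T x) : ℂ).re ≤ wA / ‖q‖ := by
        rw [le_div_iff₀ hq]
        calc (inner ℂ x (T x) : ℂ).re * ‖q‖
            ≤ ‖(inner ℂ x (T x) : ℂ)‖ * ‖q‖ := by
              apply mul_le_mul_of_nonneg_right _ hq.le
              exact Complex.re_le_norm _
          _ = ‖q‖ * ‖(inner ℂ x (T x) : ℂ)‖ := by ring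
          _ ≤ wA := qnr_lower T hex hq1 x hx
      have hrey : (inner ℂ y (T y) : ℂ).re ≤ wA / ‖q‖ := by
        rw [le_div_iff₀ hq]
        calc (inner ℂ y (T y) : ℂ).re * ‖q‖
            ≤ ‖(inner ℂ y (T y) : ℂ)‖ * ‖q‖ := by
              apply mul_le_mul_of_nonneg_right _ hq.le
              exact Complex.re_le_norm _
          _ = ‖q‖ * ‖(inner ℂ y (T y) : ℂ)‖ := by ring
          _ ≤ wA := qnr_lower T hex hq1 y hy
      have hsqrt : Real.sqrt ((inner ℂ x (T x) : ℂ).re * (inner ℂ y (T y) : ℂ).re)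
          ≤ wA / ‖q‖ := by
        have hb : (inner ℂ x (T x) : ℂ).re * (inner ℂ y (T y) : ℂ).re
            ≤ (wA / ‖q‖) * (wA / ‖q‖) :=
          mul_le_mul hrex hrey (hsecA y hy).1 (by positivity)
        calc Real.sqrt ((inner ℂ x (T x) : ℂ).re * (inner ℂ y (T y) : ℂ).re)
            ≤ Real.sqrt ((wA / ‖q‖) * (wA / ‖q‖)) := Real.sqrt_le_sqrt hb
          _ = wA / ‖q‖ := Real.sqrt_mul_self (by positivity)
      have := le_trans h1 hsqrt
      rw [inv_mul_eq_div]
      rw [le_div_iff₀ hca, mul_comm]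
      exact this
    have hopB : ‖S‖ ≤ (Real.cos α)⁻¹ * (wB / ‖q‖) := by
      apply opnorm_le_of_inner S (by positivity)
      intro x y hx hy
      have h1 := sectorBound S hα0 hα2 hsecB x y
      have hrex : (inner ℂ x (S x) : ℂ).re ≤ wB / ‖q‖ := by
        rw [le_div_iff₀ hq]
        calc (inner ℂ x (S x) : ℂ).re * ‖q‖
            ≤ ‖(inner ℂ x (S x) : ℂ)‖ * ‖q‖ := by
              apply mul_le_mul_of_nonneg_right _ hq.le
              exact Complex.re_le_norm _
          _ = ‖q‖ * ‖(inner ℂ x (S x) : ℂ)‖ := by ring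
          _ ≤ wB := qnr_lower S hex hq1 x hx
      have hrey : (inner ℂ y (S y) : ℂ).re ≤ wB / ‖q‖ := by
        rw [le_div_iff₀ hq]
        calc (inner ℂ y (S y) : ℂ).re * ‖q‖
            ≤ ‖(inner ℂ y (S y) : ℂ)‖ * ‖q‖ := by
              apply mul_le_mul_of_nonneg_right _ hq.le
              exact Complex.re_le_norm _
          _ = ‖q‖ * ‖(inner ℂ y (S y) : ℂ)‖ := by ring
          _ ≤ wB := qnr_lower S hex hq1 y hy
      have hsqrt : Real.sqrt ((inner ℂ x (S x) : ℂ).re * (inner ℂ y (S y) : ℂ).re)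
          ≤ wB / ‖q‖ := by
        have hb : (inner ℂ x (S x) : ℂ).re * (inner ℂ y (S y) : ℂ).re
            ≤ (wB / ‖q‖) * (wB / ‖q‖) :=
          mul_le_mul hrex hrey (hsecB y hy).1 (by positivity)
        calc Real.sqrt ((inner ℂ x (S x) : ℂ).re * (inner ℂ y (S y) : ℂ).re)
            ≤ Real.sqrt ((wB / ‖q‖) * (wB / ‖q‖)) := Real.sqrt_le_sqrt hb
          _ = wB / ‖q‖ := Real.sqrt_mul_self (by positivity)
      have := le_trans h1 hsqrt
      rw [inv_mul_eq_div]
      rw [le_div_iff₀ hca, mul_comm]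
      exact this
    have hmul : mCLM (A * B) = T * S := by
      rw [hT_def, hS_def]
      simp only [mCLM]
      exact map_mul _ A B
    have hub : qNumRadius q (mCLM (A * B)) ≤ ‖T‖ * ‖S‖ := by
      calc qNumRadius q (mCLM (A * B)) ≤ ‖mCLM (A * B)‖ := qnr_le_norm q _
        _ = ‖T * S‖ := by rw [hmul]
        _ ≤ ‖T‖ * ‖S‖ := norm_mul_le T S
    calc ‖q‖ ^ 2 * qNumRadius q (mCLM (A * B))
        ≤ ‖q‖ ^ 2 * (‖T‖ * ‖S‖) := by
          apply mul_le_mul_of_nonneg_left hub (by positivity)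
      _ ≤ ‖q‖ ^ 2 * (((Real.cos α)⁻¹ * (wA / ‖q‖))
            * ((Real.cos α)⁻¹ * (wB / ‖q‖))) := by
          apply mul_le_mul_of_nonneg_left _ (by positivity)
          exact mul_le_mul hopA hopB (norm_nonneg S) (by positivity)
      _ = (Real.cos α)⁻¹ ^ 2 * wA * wB := by
          field_simp
  · -- degenerate case: the constraint set is empty
    have hempty : ∀ U : EuclideanSpace ℂ (Fin n) →L[ℂ] EuclideanSpace ℂ (Fin n),
        qNumRadius q U = 0 := by
      intro U
      unfold qNumRadius
      convert Real.sSup_empty using 2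
      rw [Set.eq_empty_iff_forall_notMem]
      rintro r ⟨x, y, hx, hy, hqq, hr⟩
      exact hex ⟨x, y, hx, hy, hqq⟩
    rw [hempty, hempty, hempty]
    simp
end

section
/- Let A and B be positive semidefinite n×n complex matrices and q ∈ ℂ with 0 < |q| ≤ 1. Then |q|²·w_q(AB) ≤ w_q(A)·w_q(B). -/
open scoped ComplexOrder

lemma aux_bdd {H : Type*} [NormedAddCommGroup H] [InnerProductSpace ℂ H]
    (q : ℂ) (T : H →L[ℂ] H) :
    ∀ r ∈ {r : ℝ | ∃ x y : H, ‖x‖ = 1 ∧ ‖y‖ = 1 ∧ (inner ℂ y x : ℂ) = q ∧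
      r = ‖(inner ℂ y (T x))‖}, r ≤ ‖T‖ := by
  rintro r ⟨x, y, hx, hy, -, rfl⟩
  calc ‖(inner ℂ y (T x))‖ = ‖(inner ℂ y (T x) : ℂ)‖ := rfl
    _ ≤ ‖y‖ * ‖T x‖ := norm_inner_le_norm _ _
    _ ≤ ‖y‖ * (‖T‖ * ‖x‖) := by gcongr; exact T.le_opNorm x
    _ = ‖T‖ := by rw [hy, hx]; ring

lemma aux_norm_le {H : Type*} [NormedAddCommGroup H] [InnerProductSpace ℂ H]
    (T : H →L[ℂ] H) (hsym : ∀ x y : H, (inner ℂ (T x) y : ℂ) = inner ℂ x (T y))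
    (M : ℝ) (hM0 : 0 ≤ M)
    (hpos : ∀ x : H, 0 ≤ (inner ℂ x (T x) : ℂ).re)
    (hM : ∀ x : H, (inner ℂ x (T x) : ℂ).re ≤ M * ‖x‖ ^ 2) :
    ‖T‖ ≤ M := by
  refine T.opNorm_le_bound hM0 (fun x => ?_)
  by_cases hTx : T x = 0
  · rw [hTx, norm_zero]; positivity
  have hx : x ≠ 0 := fun h => hTx (by simp [h])
  have hnx : (0:ℝ) < ‖x‖ := norm_pos_iff.mpr hx
  have hnTx : (0:ℝ) < ‖T x‖ := norm_pos_iff.mpr hTx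
  set c : ℂ := ((‖x‖ / ‖T x‖ : ℝ) : ℂ) with hc
  set y := c • T x with hy
  have hcr : (0:ℝ) ≤ ‖x‖ / ‖T x‖ := by positivity
  have hny : ‖y‖ = ‖x‖ := by
    rw [hy, norm_smul, hc, Complex.norm_real, Real.norm_eq_abs, abs_of_nonneg hcr,
      div_mul_cancel₀ _ hnTx.ne']
  set p : ℂ := inner ℂ y (T x) with hp
  have hpre : p.re = ‖x‖ * ‖T x‖ := by
    have hc0 : ((‖T x‖ : ℝ) : ℂ) ≠ 0 := by exact_mod_cast hnTx.ne'
    rw [hp, hy, inner_smul_left, inner_self_eq_norm_sq_to_K, hc, Complex.conj_ofReal]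
    norm_cast
    field_simp
    norm_num [pow_two, Complex.mul_re, Complex.ofReal_re, Complex.ofReal_im]
    rw [← mul_assoc, div_mul_cancel₀ _ hnTx.ne']
  have hxy : (inner ℂ x (T y) : ℂ) = (starRingEnd ℂ) p := by
    rw [← hsym x y, ← inner_conj_symm (T x) y]
  have e1 : (inner ℂ (x + y) (T (x + y)) : ℂ)
      = inner ℂ x (T x) + inner ℂ y (T y) + (starRingEnd ℂ) p + p := by
    rw [map_add, inner_add_left, inner_add_right, inner_add_right, hxy, ← hp]
    ring
  have e2 : (inner ℂ (x - y) (T (x - y)) : ℂ)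
      = inner ℂ x (T x) + inner ℂ y (T y) - (starRingEnd ℂ) p - p := by
    rw [map_sub, inner_sub_left, inner_sub_right, inner_sub_right, hxy, ← hp]
    ring
  have hre1 : (inner ℂ (x + y) (T (x + y)) : ℂ).re
      = (inner ℂ x (T x) : ℂ).re + (inner ℂ y (T y) : ℂ).re + 2 * p.re := by
    rw [e1]; simp [Complex.add_re, Complex.conj_re]; ring
  have hre2 : (inner ℂ (x - y) (T (x - y)) : ℂ).re
      = (inner ℂ x (T x) : ℂ).re + (inner ℂ y (T y) : ℂ).re - 2 * p.re := by
    rw [e2]; simp [Complex.sub_re, Complex.add_re, Complex.conj_re]; ring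
  have h4 : 4 * p.re ≤ M * (2 * ‖x‖) ^ 2 := by
    have h5 : (inner ℂ (x + y) (T (x + y)) : ℂ).re ≤ M * ‖x + y‖ ^ 2 := hM _
    have h6 : 0 ≤ (inner ℂ (x - y) (T (x - y)) : ℂ).re := hpos _
    have h7 : ‖x + y‖ ≤ 2 * ‖x‖ := by
      calc ‖x + y‖ ≤ ‖x‖ + ‖y‖ := norm_add_le _ _
        _ = 2 * ‖x‖ := by rw [hny]; ring
    have h8 : M * ‖x + y‖ ^ 2 ≤ M * (2 * ‖x‖) ^ 2 := by
      apply mul_le_mul_of_nonneg_left _ hM0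
      have := norm_nonneg (x + y)
      nlinarith
    nlinarith
  have : ‖x‖ * ‖T x‖ ≤ M * ‖x‖ ^ 2 := by nlinarith [hpre]
  nlinarith

lemma aux_low {H : Type*} [NormedAddCommGroup H] [InnerProductSpace ℂ H] [CompleteSpace H]
    (T : H →L[ℂ] H) (q : ℂ) (hq : 0 < ‖q‖) (hq1 : ‖q‖ ≤ 1)
    (hwit : ∃ x y : H, ‖x‖ = 1 ∧ ‖y‖ = 1 ∧ (inner ℂ y x : ℂ) = q)
    (x : H) (hx : ‖x‖ = 1) (t : ℝ) (ht : (inner ℂ x (T x) : ℂ) = (t : ℂ)) (ht0 : 0 ≤ t) :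
    ‖q‖ * t ≤ qNumRadius q T := by
  have hxx : (inner ℂ x x : ℂ) = 1 := by
    rw [inner_self_eq_norm_sq_to_K, hx]; norm_num
  -- it suffices to find a good y
  suffices h : ∃ y : H, ‖y‖ = 1 ∧ (inner ℂ y x : ℂ) = q ∧
      ‖q‖ * t ≤ ‖(inner ℂ y (T x))‖ by
    obtain ⟨y, hy1, hyx, hval⟩ := h
    refine hval.trans (le_csSup ⟨‖T‖, fun r hr => aux_bdd q T r hr⟩ ⟨x, y, hx, hy1, hyx, rfl⟩)
  rcases eq_or_lt_of_le hq1 with habs | habs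
  · -- |q| = 1
    refine ⟨(starRingEnd ℂ) q • x, ?_, ?_, ?_⟩
    · rw [norm_smul, hx, mul_one, Complex.norm_conj, ← habs]
    · rw [inner_smul_left, starRingEnd_self_apply, hxx, mul_one]
    · rw [inner_smul_left, starRingEnd_self_apply, ht, norm_mul, Complex.norm_real, Real.norm_eq_abs,
        abs_of_nonneg ht0]
  · -- |q| < 1 : need a unit vector orthogonal to x
    have hx0 : x ≠ 0 := by intro h; rw [h, norm_zero] at hx; norm_num at hx
    have hKne : (ℂ ∙ x)ᗮ ≠ ⊥ := by
      intro hbot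
      have htop : (ℂ ∙ x) = ⊤ := Submodule.orthogonal_eq_bot_iff.mp hbot
      obtain ⟨x₁, y₁, hx₁, hy₁, hq₁⟩ := hwit
      obtain ⟨a, ha⟩ := Submodule.mem_span_singleton.mp
        (htop ▸ Submodule.mem_top : x₁ ∈ ℂ ∙ x)
      obtain ⟨b, hb⟩ := Submodule.mem_span_singleton.mp
        (htop ▸ Submodule.mem_top : y₁ ∈ ℂ ∙ x)
      have ha1 : ‖a‖ = 1 := by
        have := hx₁
        rw [← ha, norm_smul, hx, mul_one] at this
        exact this
      have hb1 : ‖b‖ = 1 := by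
        have := hy₁
        rw [← hb, norm_smul, hx, mul_one] at this
        exact this
      have : ‖q‖ = 1 := by
        rw [← hq₁, ← ha, ← hb, inner_smul_left, inner_smul_right, hxx, mul_one, norm_mul,
          Complex.norm_conj, hb1, ha1, one_mul]
      exact absurd this habs.ne
    obtain ⟨z₀, hz₀K, hz₀⟩ := Submodule.ne_bot_iff _ |>.mp hKne
    set z : H := ((‖z₀‖⁻¹ : ℝ) : ℂ) • z₀ with hzdef
    have hz₀n : ‖z₀‖ ≠ 0 := fun h => hz₀ (norm_eq_zero.mp h)
    have hz1 : ‖z‖ = 1 := by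
      rw [hzdef, norm_smul, Complex.norm_real, Real.norm_eq_abs, abs_of_nonneg (by positivity),
        inv_mul_cancel₀ hz₀n]
    have hxz₀ : (inner ℂ x z₀ : ℂ) = 0 :=
      (Submodule.mem_orthogonal _ _).mp hz₀K x (Submodule.mem_span_singleton_self x)
    have hxz : (inner ℂ x z : ℂ) = 0 := by rw [hzdef, inner_smul_right, hxz₀, mul_zero]
    have hzx : (inner ℂ z x : ℂ) = 0 := by rw [← inner_conj_symm, hxz, map_zero]
    -- the aligned coefficient
    set d : ℂ := inner ℂ z (T x) with hd
    set s : ℝ := Real.sqrt (1 - ‖q‖ ^ 2) with hs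
    have hs0 : 0 ≤ s := Real.sqrt_nonneg _
    have hs2 : s ^ 2 = 1 - ‖q‖ ^ 2 := by
      rw [hs, Real.sq_sqrt]; nlinarith
    set u : ℂ := ((starRingEnd ℂ) q / (‖q‖ : ℂ)) *
      (if d = 0 then 1 else d / (‖d‖ : ℂ)) with hu
    have hq0 : (‖q‖ : ℂ) ≠ 0 := by exact_mod_cast hq.ne'
    have hu1 : ‖u‖ = 1 := by
      rw [hu, norm_mul, norm_div, Complex.norm_conj, Complex.norm_real, Real.norm_eq_abs, abs_of_nonneg hq.le,
        div_self hq.ne']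
      split_ifs with hd0
      · simp
      · rw [norm_div, Complex.norm_real, Real.norm_eq_abs, abs_of_nonneg (norm_nonneg d),
          div_self (by simpa using hd0), mul_one]
    have hkey : (starRingEnd ℂ) u * d
        = (‖d‖ : ℂ) * (q / (‖q‖ : ℂ)) := by
      rw [hu]
      split_ifs with hd0
      · simp [hd0]
      · have hdabs : ((‖d‖ : ℝ) : ℂ) ≠ 0 := by simpa using hd0
        rw [map_mul, map_div₀, starRingEnd_self_apply, Complex.conj_ofReal, map_div₀,
          Complex.conj_ofReal]
        have hdd : (starRingEnd ℂ) d * d = (‖d‖ : ℂ) * (‖d‖ : ℂ) := by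
          rw [mul_comm, Complex.mul_conj, Complex.normSq_eq_norm_sq]
          push_cast
          ring
        field_simp
        linear_combination q * hdd
    set y : H := (starRingEnd ℂ) q • x + ((s : ℂ) * u) • z with hydef
    have hy1 : ‖y‖ = 1 := by
      have horth : (inner ℂ ((starRingEnd ℂ) q • x) (((s : ℂ) * u) • z) : ℂ) = 0 := by
        rw [inner_smul_left, inner_smul_right, hxz, mul_zero, mul_zero]
      have hsq := norm_add_sq_eq_norm_sq_add_norm_sq_of_inner_eq_zero _ _ horth
      rw [← hydef] at hsq
      have h1 : ‖(starRingEnd ℂ) q • x‖ ^ 2 = ‖q‖ ^ 2 := by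
        rw [norm_smul, hx, mul_one, Complex.norm_conj]
      have h2 : ‖((s : ℂ) * u) • z‖ ^ 2 = s ^ 2 := by
        rw [norm_smul, hz1, mul_one, norm_mul, Complex.norm_real, Real.norm_eq_abs,
          abs_of_nonneg hs0, hu1, mul_one]
      have : ‖y‖ ^ 2 = 1 := by
        rw [pow_two, hsq, ← pow_two, ← pow_two, h1, h2, hs2]; ring
      calc ‖y‖ = Real.sqrt (‖y‖ ^ 2) := (Real.sqrt_sq (norm_nonneg y)).symm
        _ = 1 := by rw [this, Real.sqrt_one]
    have hyx : (inner ℂ y x : ℂ) = q := by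
      rw [hydef, inner_add_left, inner_smul_left, inner_smul_left, starRingEnd_self_apply,
        hxx, hzx, mul_one, mul_zero, add_zero]
    refine ⟨y, hy1, hyx, ?_⟩
    have hval : (inner ℂ y (T x) : ℂ)
        = (q / (‖q‖ : ℂ)) * ((‖q‖ * t + s * ‖d‖ : ℝ) : ℂ) := by
      rw [hydef, inner_add_left, inner_smul_left, inner_smul_left, starRingEnd_self_apply,
        ht, ← hd, map_mul, Complex.conj_ofReal, mul_assoc, hkey]
      push_cast
      field_simp
    rw [hval, norm_mul, norm_div, Complex.norm_real, Real.norm_eq_abs, abs_of_nonneg hq.le, div_self hq.ne',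
      one_mul, Complex.norm_real, Real.norm_eq_abs, abs_of_nonneg (by positivity)]
    nlinarith [norm_nonneg d]

lemma aux_sa {n : ℕ} {C : Matrix (Fin n) (Fin n) ℂ} (hC : C.PosSemidef) :
    IsSelfAdjoint (mCLM C) := by
  rw [IsSelfAdjoint, mCLM, ← map_star]
  congr 1
  rw [Matrix.star_eq_conjTranspose]
  exact hC.1

lemma aux_pos {n : ℕ} {C : Matrix (Fin n) (Fin n) ℂ} (hC : C.PosSemidef)
    (x : EuclideanSpace ℂ (Fin n)) :
    ∃ t : ℝ, 0 ≤ t ∧ (inner ℂ x (mCLM C x) : ℂ) = (t : ℂ) := by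
  have h0 : (0 : ℂ) ≤ inner ℂ x (mCLM C x) := by
    convert hC.dotProduct_mulVec_nonneg x.ofLp using 1
    simp [mCLM, EuclideanSpace.inner_eq_star_dotProduct, dotProduct_comm]
  rw [Complex.le_def] at h0
  refine ⟨(inner ℂ x (mCLM C x) : ℂ).re, by simpa using h0.1, ?_⟩
  apply Complex.ext
  · exact (Complex.ofReal_re _).symm
  · rw [Complex.ofReal_im]
    simpa using h0.2.symm

lemma aux_main {n : ℕ} {C : Matrix (Fin n) (Fin n) ℂ} (hC : C.PosSemidef)
    (q : ℂ) (hq : 0 < ‖q‖) (hq1 : ‖q‖ ≤ 1)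
    (hwit : ∃ x y : EuclideanSpace ℂ (Fin n), ‖x‖ = 1 ∧ ‖y‖ = 1 ∧ (inner ℂ y x : ℂ) = q) :
    ‖q‖ * ‖mCLM C‖ ≤ qNumRadius q (mCLM C) := by
  set w := qNumRadius q (mCLM C) with hw
  have hw0 : 0 ≤ w := by
    apply Real.sSup_nonneg
    rintro r ⟨x, y, -, -, -, rfl⟩
    exact norm_nonneg _
  have hMb : ∀ x : EuclideanSpace ℂ (Fin n), ‖x‖ = 1 →
      (inner ℂ x (mCLM C x) : ℂ).re ≤ w / ‖q‖ := by
    intro x hx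
    obtain ⟨t, ht0, ht⟩ := aux_pos hC x
    have hlow := aux_low (mCLM C) q hq hq1 hwit x hx t ht ht0
    rw [ht, Complex.ofReal_re, le_div_iff₀ hq]
    linarith [mul_comm t (‖q‖) ▸ hlow]
  have hMall : ∀ x : EuclideanSpace ℂ (Fin n),
      (inner ℂ x (mCLM C x) : ℂ).re ≤ (w / ‖q‖) * ‖x‖ ^ 2 := by
    intro x
    rcases eq_or_ne x 0 with rfl | hx0
    · simp
    have hnx : (0:ℝ) < ‖x‖ := norm_pos_iff.mpr hx0
    set u : EuclideanSpace ℂ (Fin n) := ((‖x‖⁻¹ : ℝ) : ℂ) • x with hu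
    have hu1 : ‖u‖ = 1 := by
      rw [hu, norm_smul, Complex.norm_real, Real.norm_eq_abs, abs_of_nonneg (by positivity),
        inv_mul_cancel₀ hnx.ne']
    have hscale : (inner ℂ x (mCLM C x) : ℂ)
        = ((‖x‖ ^ 2 : ℝ) : ℂ) * inner ℂ u (mCLM C u) := by
      rw [hu, inner_smul_left, map_smul, inner_smul_right, Complex.conj_ofReal]
      push_cast
      field_simp
    rw [hscale]
    have hre : (((‖x‖ ^ 2 : ℝ) : ℂ) * (inner ℂ u (mCLM C u) : ℂ)).re
        = ‖x‖ ^ 2 * (inner ℂ u (mCLM C u) : ℂ).re := by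
      rw [Complex.re_ofReal_mul]
    rw [hre]
    calc ‖x‖ ^ 2 * (inner ℂ u (mCLM C u) : ℂ).re
        ≤ ‖x‖ ^ 2 * (w / ‖q‖) := by
          apply mul_le_mul_of_nonneg_left (hMb u hu1) (sq_nonneg _)
      _ = (w / ‖q‖) * ‖x‖ ^ 2 := by ring
  have hsym : ∀ x y : EuclideanSpace ℂ (Fin n),
      (inner ℂ (mCLM C x) y : ℂ) = inner ℂ x (mCLM C y) := fun x y => (aux_sa hC).isSymmetric x y
  have hposre : ∀ x : EuclideanSpace ℂ (Fin n), 0 ≤ (inner ℂ x (mCLM C x) : ℂ).re := by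
    intro x
    obtain ⟨t, ht0, ht⟩ := aux_pos hC x
    rw [ht, Complex.ofReal_re]; exact ht0
  have := aux_norm_le (mCLM C) hsym (w / ‖q‖) (div_nonneg hw0 hq.le) hposre hMall
  rw [le_div_iff₀ hq] at this
  linarith [mul_comm (‖mCLM C‖) (‖q‖) ▸ this]

theorem stmt4 {n : ℕ} (A B : Matrix (Fin n) (Fin n) ℂ)
    (hA : A.PosSemidef) (hB : B.PosSemidef)
    (q : ℂ) (hq : 0 < ‖q‖) (hq1 : ‖q‖ ≤ 1) :
    ‖q‖ ^ 2 * qNumRadius q (mCLM (A * B)) ≤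
      qNumRadius q (mCLM A) * qNumRadius q (mCLM B) := by
  classical
  by_cases hwit : ∃ x y : EuclideanSpace ℂ (Fin n), ‖x‖ = 1 ∧ ‖y‖ = 1 ∧ (inner ℂ y x : ℂ) = q
  · have h1 := aux_main hA q hq hq1 hwit
    have h2 := aux_main hB q hq hq1 hwit
    have hup : qNumRadius q (mCLM (A * B)) ≤ ‖mCLM (A * B)‖ :=
      Real.sSup_le (aux_bdd q _) (norm_nonneg _)
    have hABeq : mCLM (A * B) = mCLM A * mCLM B := by
      unfold mCLM; exact map_mul _ _ _
    have hmul : ‖mCLM (A * B)‖ ≤ ‖mCLM A‖ * ‖mCLM B‖ := by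
      rw [hABeq]; exact norm_mul_le _ _
    have hwA0 : 0 ≤ qNumRadius q (mCLM A) := by
      apply Real.sSup_nonneg
      rintro r ⟨x, y, -, -, -, rfl⟩
      exact norm_nonneg _
    have hkey : (‖q‖ * ‖mCLM A‖) * (‖q‖ * ‖mCLM B‖)
        ≤ qNumRadius q (mCLM A) * qNumRadius q (mCLM B) :=
      mul_le_mul h1 h2 (by positivity) hwA0
    have hq2 : ‖q‖ ^ 2 * qNumRadius q (mCLM (A * B))
        ≤ ‖q‖ ^ 2 * (‖mCLM A‖ * ‖mCLM B‖) :=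
      mul_le_mul_of_nonneg_left (hup.trans hmul) (sq_nonneg _)
    nlinarith
  · have hempty : ∀ T : EuclideanSpace ℂ (Fin n) →L[ℂ] EuclideanSpace ℂ (Fin n),
        qNumRadius q T = 0 := by
      intro T
      unfold qNumRadius
      convert Real.sSup_empty using 2
      ext r
      simp only [Set.mem_setOf_eq, Set.mem_empty_iff_false, iff_false, not_exists]
      intro x y h
      exact absurd ⟨x, y, h.1, h.2.1, h.2.2.1⟩ hwit
    rw [hempty, hempty, hempty]
    simp
end

section
/- Let A be an n×n complex matrix whose numerical range is contained in the sector S_α for some α ∈ [0, π/2), and let q ∈ ℂ with |q| ≤ 1. Then w_q(A) ≤ (√((1−|q|²)(1+2sin²(α))) + |q|)·w(A). -/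
open scoped InnerProductSpace ComplexConjugate

set_option maxHeartbeats 1000000


namespace QNRAux

variable {H : Type*} [NormedAddCommGroup H] [InnerProductSpace ℂ H]

lemma sq_le_imp {a b : ℝ} (ha : 0 ≤ a) (hb : 0 ≤ b) (h : a^2 ≤ b^2) : a ≤ b := by nlinarith

lemma numRadius_nonneg (T : H →L[ℂ] H) : 0 ≤ numRadius T := by
  apply Real.sSup_nonneg
  rintro r ⟨x, hx, rfl⟩
  positivity

lemma abs_inner_le_numRadius (T : H →L[ℂ] H) {x : H} (hx : ‖x‖ = 1) :
    ‖inner ℂ x (T x)‖ ≤ numRadius T := by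
  apply le_csSup
  · refine ⟨‖T‖, ?_⟩
    rintro r ⟨v, hv, rfl⟩
    calc ‖inner ℂ v (T v)‖ = ‖(inner ℂ v (T v) : ℂ)‖ := rfl
      _ ≤ ‖v‖ * ‖T v‖ := norm_inner_le_norm v (T v)
      _ ≤ ‖v‖ * (‖T‖ * ‖v‖) := by gcongr; exact T.le_opNorm v
      _ = ‖T‖ := by rw [hv]; ring
  · exact ⟨x, hx, rfl⟩

lemma unit_scale (T : H →L[ℂ] H) {v : H} (hv : v ≠ 0) :
    ∃ u : H, ‖u‖ = 1 ∧ (inner ℂ v (T v) : ℂ) = ((‖v‖^2 : ℝ) : ℂ) * inner ℂ u (T u) := by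
  have hn : (‖v‖ : ℝ) ≠ 0 := norm_ne_zero_iff.mpr hv
  have hnc : (‖v‖ : ℂ) ≠ 0 := by exact_mod_cast hn
  refine ⟨((‖v‖ : ℂ))⁻¹ • v, ?_, ?_⟩
  · rw [norm_smul, norm_inv, Complex.norm_real, Real.norm_eq_abs, abs_of_nonneg (norm_nonneg v),
      inv_mul_cancel₀ hn]
  · rw [map_smul, inner_smul_left, inner_smul_right, map_inv₀, Complex.conj_ofReal]
    field_simp
    norm_cast

lemma numRadius_bound (T : H →L[ℂ] H) (v : H) :
    ‖inner ℂ v (T v)‖ ≤ numRadius T * ‖v‖^2 := by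
  rcases eq_or_ne v 0 with rfl | hv
  · simp
  obtain ⟨u, hu, he⟩ := unit_scale T hv
  rw [he, norm_mul, Complex.norm_real, Real.norm_eq_abs, abs_of_nonneg (by positivity)]
  rw [mul_comm]
  gcongr
  exact abs_inner_le_numRadius T hu

variable [CompleteSpace H]

lemma cs_pos (S : H →L[ℂ] H) (hS : IsSelfAdjoint S)
    (hpos : ∀ v : H, 0 ≤ (inner ℂ v (S v) : ℂ).re) (u v : H) :
    ‖inner ℂ u (S v)‖ ^ 2 ≤ (inner ℂ u (S u) : ℂ).re * (inner ℂ v (S v) : ℂ).re := by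
  have hsym := hS.isSymmetric
  rcases eq_or_ne (inner ℂ u (S v) : ℂ) 0 with h0 | h0
  · rw [h0]
    simpa using mul_nonneg (hpos u) (hpos v)
  set z : ℂ := inner ℂ u (S v) with hz
  have habs : (‖z‖ : ℝ) ≠ 0 := by simpa using h0
  have habsC : ((‖z‖ : ℝ) : ℂ) ≠ 0 := by exact_mod_cast habs
  set c : ℂ := z / (‖z‖ : ℝ) with hc
  have hvSu : (inner ℂ v (S u) : ℂ) = starRingEnd ℂ z := by
    rw [hz, ← inner_conj_symm]
    exact congrArg _ (hsym u v)
  have hcz : (starRingEnd ℂ) c * z = (‖z‖ : ℂ) := by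
    rw [hc, map_div₀, Complex.conj_ofReal, div_mul_eq_mul_div, mul_comm,
      Complex.mul_conj, Complex.normSq_eq_norm_sq]
    push_cast
    rw [sq, mul_div_assoc, div_self habsC, mul_one]
  have hcz2 : c * (starRingEnd ℂ) z = (‖z‖ : ℂ) := by
    rw [hc, div_mul_eq_mul_div, Complex.mul_conj, Complex.normSq_eq_norm_sq]
    push_cast
    rw [sq, mul_div_assoc, div_self habsC, mul_one]
  have hcc : (starRingEnd ℂ) c * c = 1 := by
    rw [hc, map_div₀, Complex.conj_ofReal, div_mul_div_comm, mul_comm,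
      Complex.mul_conj, Complex.normSq_eq_norm_sq]
    push_cast
    rw [sq]
    field_simp
  have key : ∀ lam : ℝ, 0 ≤ (inner ℂ v (S v) : ℂ).re * (lam * lam) +
      (2 * ‖z‖) * lam + (inner ℂ u (S u) : ℂ).re := by
    intro lam
    have h1 := hpos (c • u + (lam : ℂ) • v)
    have hexp : (inner ℂ (c • u + (lam:ℂ) • v) (S (c • u + (lam:ℂ) • v)) : ℂ) =
        (inner ℂ u (S u) : ℂ) + (2 * lam * ‖z‖ : ℝ)
          + ((lam * lam : ℝ) : ℂ) * inner ℂ v (S v) := by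
      simp only [map_add, map_smul, inner_add_left, inner_add_right,
        inner_smul_left, inner_smul_right, Complex.conj_ofReal, hvSu, ← hz]
      push_cast
      linear_combination (inner ℂ u (S u) : ℂ) * hcc + (lam:ℂ) * hcz + (lam:ℂ) * hcz2
    rw [hexp] at h1
    simp only [Complex.add_re, Complex.ofReal_re, Complex.mul_re, Complex.ofReal_im] at h1
    nlinarith [h1]
  have hd := discrim_le_zero key
  rw [discrim] at hd
  nlinarith [hd]

lemma selfadj_apply_norm_le (S : H →L[ℂ] H) (hS : IsSelfAdjoint S) (M : ℝ)
    (hb : ∀ v : H, ‖inner ℂ v (S v)‖ ≤ M * ‖v‖^2) {x : H} (hx : ‖x‖ = 1) :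
    ‖S x‖ ≤ M := by
  have hsym := hS.isSymmetric
  have hM : 0 ≤ M := by
    have := hb x
    rw [hx] at this
    have h0 : (0:ℝ) ≤ ‖inner ℂ x (S x)‖ := by positivity
    nlinarith
  rcases eq_or_ne (S x) 0 with h0 | h0
  · rw [h0]; simpa using hM
  have hn : (‖S x‖ : ℝ) ≠ 0 := norm_ne_zero_iff.mpr h0
  have hnC : ((‖S x‖ : ℝ) : ℂ) ≠ 0 := by exact_mod_cast hn
  set y : H := ((‖S x‖ : ℝ) : ℂ)⁻¹ • (S x) with hy
  have hy1 : ‖y‖ = 1 := by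
    rw [hy, norm_smul, norm_inv, Complex.norm_real, Real.norm_eq_abs,
      abs_of_nonneg (norm_nonneg _), inv_mul_cancel₀ hn]
  have hySx : (inner ℂ y (S x) : ℂ) = ((‖S x‖ : ℝ) : ℂ) := by
    rw [hy, inner_smul_left, map_inv₀, Complex.conj_ofReal, inner_self_eq_norm_sq_to_K]
    rw [sq]
    field_simp
    rfl
  have hxSy : (inner ℂ x (S y) : ℂ) = ((‖S x‖ : ℝ) : ℂ) := by
    have h' : (inner ℂ (S y) x : ℂ) = inner ℂ y (S x) := hsym y x
    rw [← inner_conj_symm, h', hySx, Complex.conj_ofReal]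
  have hdiff : (inner ℂ (x+y) (S (x+y)) : ℂ) - inner ℂ (x-y) (S (x-y)) =
      2 * (inner ℂ x (S y) + inner ℂ y (S x)) := by
    simp only [map_add, map_sub, inner_add_left, inner_add_right, inner_sub_left,
      inner_sub_right]
    ring
  have hre : ((inner ℂ (x+y) (S (x+y)) : ℂ)).re - ((inner ℂ (x-y) (S (x-y)) : ℂ)).re
      = 4 * ‖S x‖ := by
    have := congrArg Complex.re hdiff
    simp only [Complex.sub_re] at this
    rw [this, hxSy, hySx]
    simp
    ring
  have hpar := parallelogram_law_with_norm ℂ x y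
  have b1 : ((inner ℂ (x+y) (S (x+y)) : ℂ)).re ≤ M * ‖x+y‖^2 := by
    calc ((inner ℂ (x+y) (S (x+y)) : ℂ)).re ≤ ‖inner ℂ (x+y) (S (x+y))‖ :=
          Complex.re_le_norm _
      _ ≤ M * ‖x+y‖^2 := hb _
  have b2 : -((inner ℂ (x-y) (S (x-y)) : ℂ)).re ≤ M * ‖x-y‖^2 := by
    calc -((inner ℂ (x-y) (S (x-y)) : ℂ)).re ≤ |((inner ℂ (x-y) (S (x-y)) : ℂ)).re| :=
          neg_le_abs _
      _ ≤ ‖inner ℂ (x-y) (S (x-y))‖ := Complex.abs_re_le_norm _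
      _ ≤ M * ‖x-y‖^2 := hb _
  have hx2 : ‖x‖ * ‖x‖ = 1 := by rw [hx]; ring
  have hy2 : ‖y‖ * ‖y‖ = 1 := by rw [hy1]; ring
  nlinarith [hre, b1, b2, hpar, sq_nonneg (‖x+y‖), sq_nonneg (‖x-y‖)]

lemma key {n : ℕ} (A : Matrix (Fin n) (Fin n) ℂ) (α : ℝ)
    (hα1 : 0 ≤ α) (hα2 : α < Real.pi / 2) (hA : InSector α A)
    {x : EuclideanSpace ℂ (Fin n)} (hx : ‖x‖ = 1) :
    ‖mCLM A x - (inner ℂ x (mCLM A x) : ℂ) • x‖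
      ≤ (1/2 + Real.sin α) * numRadius (mCLM A) := by
  set T := mCLM A with hT
  set w := numRadius T with hw
  have hw0 : 0 ≤ w := numRadius_nonneg T
  set s := Real.sin α with hs
  have hpi : α ≤ Real.pi := by
    have := Real.pi_pos
    linarith
  have hs0 : 0 ≤ s := Real.sin_nonneg_of_nonneg_of_le_pi hα1 hpi
  have hcos : 0 < Real.cos α := by
    apply Real.cos_pos_of_mem_Ioo
    constructor
    · have := Real.pi_pos; linarith
    · exact hα2
  -- scaled sector facts
  have hsec_re : ∀ v : EuclideanSpace ℂ (Fin n), 0 ≤ (inner ℂ v (T v) : ℂ).re := by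
    intro v
    rcases eq_or_ne v 0 with rfl | hv
    · simp
    obtain ⟨u, hu, he⟩ := unit_scale T hv
    rw [he]
    simp only [Complex.mul_re, Complex.ofReal_re, Complex.ofReal_im, zero_mul, sub_zero]
    have := (hA u hu).1
    positivity
  have hsec_im_unit : ∀ u : EuclideanSpace ℂ (Fin n), ‖u‖ = 1 →
      |(inner ℂ u (T u) : ℂ).im| ≤ s * ‖inner ℂ u (T u)‖ := by
    intro u hu
    obtain ⟨h1, h2⟩ := hA u hu
    set z : ℂ := inner ℂ u (T u)
    have h3 : Real.cos α * |z.im| ≤ s * z.re := by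
      have := mul_le_mul_of_nonneg_left h2 (le_of_lt hcos)
      calc Real.cos α * |z.im| ≤ Real.cos α * (Real.tan α * z.re) := this
        _ = s * z.re := by
            rw [Real.tan_eq_sin_div_cos]
            field_simp
            exact hs.symm
    have habs2 : ‖z‖ ^ 2 = z.re^2 + z.im^2 := by
      rw [Complex.sq_norm, Complex.normSq_apply]; ring
    apply sq_le_imp (abs_nonneg _) (by positivity)
    have h4 : (Real.cos α * |z.im|)^2 ≤ (s * z.re)^2 := by
      apply pow_le_pow_left₀ (by positivity) h3
    have h5 := Real.sin_sq_add_cos_sq α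
    nlinarith [h4, h5, sq_nonneg z.im, sq_abs z.im, abs_nonneg z.im,
      Complex.sq_norm z, Complex.normSq_apply z]
  have hsec_im : ∀ v : EuclideanSpace ℂ (Fin n),
      |(inner ℂ v (T v) : ℂ).im| ≤ (s * w) * ‖v‖^2 := by
    intro v
    rcases eq_or_ne v 0 with rfl | hv
    · simp
    obtain ⟨u, hu, he⟩ := unit_scale T hv
    have hb := abs_inner_le_numRadius T hu
    rw [he]
    simp only [Complex.mul_im, Complex.ofReal_re, Complex.ofReal_im, zero_mul, add_zero]
    rw [abs_mul, abs_of_nonneg (by positivity : (0:ℝ) ≤ ‖v‖^2)]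
    calc ‖v‖^2 * |(inner ℂ u (T u) : ℂ).im| ≤ ‖v‖^2 * (s * ‖inner ℂ u (T u)‖) := by
          gcongr
          exact hsec_im_unit u hu
      _ ≤ ‖v‖^2 * (s * w) := by gcongr
      _ = (s * w) * ‖v‖^2 := by ring
  -- real and imaginary parts of T
  set Tad := ContinuousLinearMap.adjoint T with hTad
  set R : EuclideanSpace ℂ (Fin n) →L[ℂ] EuclideanSpace ℂ (Fin n) :=
    (1/2 : ℂ) • (T + Tad) with hR
  set J : EuclideanSpace ℂ (Fin n) →L[ℂ] EuclideanSpace ℂ (Fin n) :=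
    (Complex.I/2) • (Tad - T) with hJ
  have hRsa : IsSelfAdjoint R := by
    rw [IsSelfAdjoint, hR, star_smul, ContinuousLinearMap.star_eq_adjoint, map_add,
      hTad, ContinuousLinearMap.adjoint_adjoint]
    simp [add_comm]
  have hJsa : IsSelfAdjoint J := by
    have h1 : star (Tad - T) = star Tad - star T := star_sub _ _
    rw [IsSelfAdjoint, hJ, star_smul, h1, ContinuousLinearMap.star_eq_adjoint,
      ContinuousLinearMap.star_eq_adjoint, hTad, ContinuousLinearMap.adjoint_adjoint]
    have hst : (star (Complex.I/2) : ℂ) = -(Complex.I/2) := by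
      rw [Complex.star_def]
      simp [map_div₀, Complex.conj_I, Complex.conj_ofNat]
      ring
    rw [hst]
    module
  have hTRJ : T = R + Complex.I • J := by
    have hI2 : Complex.I • J = (-(1/2) : ℂ) • (Tad - T) := by
      rw [hJ, smul_smul, mul_div_assoc', Complex.I_mul_I]
      module
    rw [hI2, hR]
    module
  have hRv : ∀ v : EuclideanSpace ℂ (Fin n),
      (inner ℂ v (R v) : ℂ) = (((inner ℂ v (T v) : ℂ).re : ℝ) : ℂ) := by
    intro v
    rw [hR]
    simp only [ContinuousLinearMap.smul_apply, ContinuousLinearMap.add_apply,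
      inner_smul_right, inner_add_right]
    rw [hTad, ContinuousLinearMap.adjoint_inner_right, ← inner_conj_symm (T v) v,
      Complex.add_conj]
    push_cast
    ring
  have hJv : ∀ v : EuclideanSpace ℂ (Fin n),
      (inner ℂ v (J v) : ℂ) = (((inner ℂ v (T v) : ℂ).im : ℝ) : ℂ) := by
    intro v
    rw [hJ]
    simp only [ContinuousLinearMap.smul_apply, ContinuousLinearMap.sub_apply,
      inner_smul_right, inner_sub_right]
    rw [hTad, ContinuousLinearMap.adjoint_inner_right, ← inner_conj_symm (T v) v]
    set z : ℂ := inner ℂ v (T v)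
    have hsc := Complex.sub_conj z
    push_cast at hsc
    linear_combination (-(Complex.I)/2) * hsc + (-(z.im : ℂ)) * Complex.I_mul_I
  have hRpos : ∀ v : EuclideanSpace ℂ (Fin n), 0 ≤ (inner ℂ v (R v) : ℂ).re := by
    intro v
    rw [hRv v]
    simp only [Complex.ofReal_re]
    exact hsec_re v
  have hJb : ∀ v : EuclideanSpace ℂ (Fin n),
      ‖inner ℂ v (J v)‖ ≤ (s * w) * ‖v‖^2 := by
    intro v
    rw [hJv v, Complex.norm_real, Real.norm_eq_abs]
    exact hsec_im v
  set t : ℝ := (inner ℂ x (T x) : ℂ).re with ht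
  have ht0 : 0 ≤ t := hsec_re x
  have habsx : ‖inner ℂ x (T x)‖ ≤ w := abs_inner_le_numRadius T hx
  have htw : t ≤ w := le_trans (Complex.re_le_norm _) habsx
  have hu : ‖J x‖ ≤ s * w := selfadj_apply_norm_le J hJsa (s * w) hJb hx
  have hrho : ‖R x‖^2 ≤ w * t := by
    have hcs := cs_pos R hRsa hRpos (R x) x
    have e1 : ‖inner ℂ (R x) (R x)‖ = ‖R x‖^2 := by
      have h9 : (inner ℂ (R x) (R x) : ℂ) = ((‖R x‖^2 : ℝ) : ℂ) := by
        exact_mod_cast inner_self_eq_norm_sq_to_K (𝕜 := ℂ) (R x)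
      rw [h9, Complex.norm_real, Real.norm_eq_abs, abs_of_nonneg (by positivity)]
    have e2 : (inner ℂ (R x) (R (R x)) : ℂ).re ≤ w * ‖R x‖^2 := by
      rw [hRv (R x)]
      simp only [Complex.ofReal_re]
      calc (inner ℂ (R x) (T (R x)) : ℂ).re ≤ ‖inner ℂ (R x) (T (R x))‖ :=
            Complex.re_le_norm _
        _ ≤ w * ‖R x‖^2 := numRadius_bound T (R x)
    have e3 : (inner ℂ x (R x) : ℂ).re = t := by rw [hRv x]; simp [ht]
    rw [e1, e3] at hcs
    rcases eq_or_ne (‖R x‖) 0 with h0 | h0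
    · rw [h0]
      simpa using mul_nonneg hw0 ht0
    · have hp : 0 < ‖R x‖^2 := by positivity
      have h8 : ‖R x‖^2 * ‖R x‖^2 ≤ (w * t) * ‖R x‖^2 := by
        nlinarith [hcs, mul_le_mul_of_nonneg_right e2 ht0]
      exact le_of_mul_le_mul_right h8 hp
  set d : ℝ := ‖R x - (t:ℂ) • x‖ with hd
  have hd0 : 0 ≤ d := norm_nonneg _
  have hRxx : (inner ℂ (R x) x : ℂ) = ((t:ℝ) : ℂ) := by
    rw [← inner_conj_symm (R x) x, hRv x, Complex.conj_ofReal]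
  have hd2 : d^2 = ‖R x‖^2 - t^2 := by
    rw [hd, norm_sub_sq (𝕜 := ℂ), inner_smul_right, hRxx, norm_smul, hx]
    simp only [RCLike.re_to_complex]
    rw [← Complex.ofReal_mul]
    simp only [Complex.ofReal_re, Complex.norm_real]
    rw [Real.norm_eq_abs, mul_one]
    rw [sq_abs]
    ring
  have hdw : d ≤ w/2 := by
    apply sq_le_imp hd0 (by linarith)
    rw [hd2]
    nlinarith [hrho, sq_nonneg (w - 2*t)]
  have hTx : T x = R x + Complex.I • J x := by
    rw [hTRJ]
    simp [ContinuousLinearMap.add_apply, ContinuousLinearMap.smul_apply]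
  have hortho : (inner ℂ ((t:ℂ) • x) (Complex.I • J x) : ℂ).re = 0 := by
    rw [inner_smul_left, inner_smul_right, hJv x, Complex.conj_ofReal]
    simp [Complex.mul_re, Complex.mul_im]
  have hsplit2 : (inner ℂ (R x) (Complex.I • J x) : ℂ) =
      inner ℂ (R x - (t:ℂ) • x) (Complex.I • J x) + inner ℂ ((t:ℂ) • x) (Complex.I • J x) := by
    rw [← inner_add_left, sub_add_cancel]
  have h6 : |(inner ℂ (R x) (Complex.I • J x) : ℂ).re| ≤ d * ‖J x‖ := by
    rw [hsplit2]
    simp only [Complex.add_re, hortho, add_zero]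
    calc |(inner ℂ (R x - (t:ℂ) • x) (Complex.I • J x) : ℂ).re|
        ≤ ‖inner ℂ (R x - (t:ℂ) • x) (Complex.I • J x)‖ := Complex.abs_re_le_norm _
      _ = ‖(inner ℂ (R x - (t:ℂ) • x) (Complex.I • J x) : ℂ)‖ := rfl
      _ ≤ ‖R x - (t:ℂ) • x‖ * ‖Complex.I • J x‖ := norm_inner_le_norm _ _
      _ = d * ‖J x‖ := by rw [hd, norm_smul]; simp
  have h7 : (inner ℂ (R x) (Complex.I • J x) : ℂ).re ≤ d * ‖J x‖ :=
    le_trans (le_abs_self _) h6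
  have hnorm : ‖T x‖^2 = ‖R x‖^2 + 2*(inner ℂ (R x) (Complex.I • J x) : ℂ).re + ‖J x‖^2 := by
    rw [hTx, norm_add_sq (𝕜 := ℂ)]
    simp only [RCLike.re_to_complex]
    rw [norm_smul]
    simp
    simp [inner_smul_right, Complex.mul_re]
  have hzx : (inner ℂ (T x) x : ℂ) = (starRingEnd ℂ) (inner ℂ x (T x)) := by
    rw [← inner_conj_symm (T x) x]
  have hg2 : ‖T x - (inner ℂ x (T x) : ℂ) • x‖^2
      = ‖T x‖^2 - ‖inner ℂ x (T x)‖^2 := by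
    rw [norm_sub_sq (𝕜 := ℂ), inner_smul_right, hzx, mul_comm, Complex.mul_conj, norm_smul, hx]
    simp only [RCLike.re_to_complex, Complex.ofReal_re, mul_one]
    rw [Complex.normSq_eq_norm_sq]
    ring
  have ht2 : t^2 ≤ ‖inner ℂ x (T x)‖^2 :=
    pow_le_pow_left₀ ht0 (Complex.re_le_norm _) 2
  have hu2 : ‖J x‖^2 ≤ (s*w)^2 := pow_le_pow_left₀ (norm_nonneg _) hu 2
  have hdsq : d^2 ≤ (w/2)^2 := pow_le_pow_left₀ hd0 hdw 2
  have hcr : d * ‖J x‖ ≤ (w/2) * (s*w) :=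
    mul_le_mul hdw hu (norm_nonneg _) (by linarith)
  apply sq_le_imp (norm_nonneg _) (by positivity)
  rw [hg2]
  nlinarith [hnorm, h7, hd2, ht2, hu2, hdsq, hcr]

end QNRAux

theorem stmt5 {n : ℕ} (A : Matrix (Fin n) (Fin n) ℂ) (α : ℝ)
    (hα : 0 ≤ α ∧ α < Real.pi / 2) (hA : InSector α A)
    (q : ℂ) (hq : ‖q‖ ≤ 1) :
    qNumRadius q (mCLM A) ≤
      (Real.sqrt ((1 - ‖q‖ ^ 2) * (1 + 2 * Real.sin α ^ 2)) + ‖q‖) *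
        numRadius (mCLM A) := by
  obtain ⟨hα1, hα2⟩ := hα
  set T := mCLM A with hT
  set w := numRadius T with hw
  have hw0 : 0 ≤ w := QNRAux.numRadius_nonneg T
  set s := Real.sin α with hs
  have hpi : α ≤ Real.pi := by have := Real.pi_pos; linarith
  have hs0 : 0 ≤ s := Real.sin_nonneg_of_nonneg_of_le_pi hα1 hpi
  have hq0 : 0 ≤ ‖q‖ := norm_nonneg q
  have hq2 : 0 ≤ 1 - ‖q‖^2 := by nlinarith
  have hRHS : 0 ≤ (Real.sqrt ((1 - ‖q‖ ^ 2) * (1 + 2 * s ^ 2)) + ‖q‖) * w :=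
    mul_nonneg (add_nonneg (Real.sqrt_nonneg _) hq0) hw0
  apply Real.sSup_le _ hRHS
  rintro r ⟨x, y, hx1, hy1, hyx, rfl⟩
  set p : EuclideanSpace ℂ (Fin n) := y - (starRingEnd ℂ q) • x with hp
  have hxx : (inner ℂ x x : ℂ) = 1 := by
    rw [inner_self_eq_norm_sq_to_K, hx1]
    norm_num
  have hpx : (inner ℂ p x : ℂ) = 0 := by
    rw [hp, inner_sub_left, inner_smul_left, hxx, hyx, Complex.conj_conj]
    ring
  have hpn2 : ‖p‖^2 = 1 - ‖q‖^2 := by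
    rw [hp, norm_sub_sq (𝕜 := ℂ), inner_smul_right, hyx, norm_smul, hx1, hy1]
    simp only [RCLike.re_to_complex]
    rw [mul_comm ((starRingEnd ℂ) q) q, Complex.mul_conj, Complex.normSq_eq_norm_sq]
    simp only [Complex.ofReal_re]
    rw [RCLike.norm_conj]
    ring
  have hpn : ‖p‖ = Real.sqrt (1 - ‖q‖^2) := by
    rw [← hpn2, Real.sqrt_sq (norm_nonneg p)]
  have hy' : y = p + (starRingEnd ℂ q) • x := by rw [hp, sub_add_cancel]
  have hsplit : (inner ℂ y (T x) : ℂ) = q * inner ℂ x (T x) + inner ℂ p (T x) := by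
    rw [hy', inner_add_left, inner_smul_left, Complex.conj_conj]
    ring
  have hptx : (inner ℂ p (T x) : ℂ) = inner ℂ p (T x - (inner ℂ x (T x) : ℂ) • x) := by
    rw [inner_sub_right, inner_smul_right, hpx]
    ring
  have hkey := QNRAux.key A α hα1 hα2 hA hx1
  have hbp : ‖inner ℂ p (T x)‖ ≤ Real.sqrt (1 - ‖q‖^2) * ((1/2 + s) * w) := by
    rw [hptx]
    calc ‖inner ℂ p (T x - (inner ℂ x (T x) : ℂ) • x)‖
        = ‖(inner ℂ p (T x - (inner ℂ x (T x) : ℂ) • x) : ℂ)‖ := rfl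
      _ ≤ ‖p‖ * ‖T x - (inner ℂ x (T x) : ℂ) • x‖ := norm_inner_le_norm _ _
      _ ≤ Real.sqrt (1 - ‖q‖^2) * ((1/2 + s) * w) := by
          rw [hpn]
          gcongr
  have habsx : ‖inner ℂ x (T x)‖ ≤ w := QNRAux.abs_inner_le_numRadius T hx1
  have hsqrt : (1/2 + s) ≤ Real.sqrt (1 + 2*s^2) := by
    rw [show (1:ℝ) + 2*s^2 = ((1/2+s))^2 + (3/4 - s + s^2) by ring]
    have h34 : 0 ≤ 3/4 - s + s^2 := by nlinarith [sq_nonneg (s - 1/2)]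
    calc (1/2 + s) = Real.sqrt ((1/2+s)^2) := (Real.sqrt_sq (by linarith)).symm
      _ ≤ Real.sqrt ((1/2+s)^2 + (3/4 - s + s^2)) := Real.sqrt_le_sqrt (by linarith)
  calc ‖inner ℂ y (T x)‖
      ≤ ‖q‖ * ‖inner ℂ x (T x)‖ + ‖inner ℂ p (T x)‖ := by
        rw [hsplit]
        calc ‖q * inner ℂ x (T x) + inner ℂ p (T x)‖
            ≤ ‖q * inner ℂ x (T x)‖ + ‖inner ℂ p (T x)‖ :=
              norm_add_le _ _
          _ = ‖q‖ * ‖inner ℂ x (T x)‖ + ‖inner ℂ p (T x)‖ := by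
              rw [norm_mul]
    _ ≤ ‖q‖ * w + Real.sqrt (1 - ‖q‖^2) * ((1/2 + s) * w) := by
        gcongr
    _ ≤ ‖q‖ * w + Real.sqrt (1 - ‖q‖^2) * (Real.sqrt (1 + 2*s^2) * w) := by
        gcongr
    _ = (Real.sqrt ((1 - ‖q‖ ^ 2) * (1 + 2 * s ^ 2)) + ‖q‖) * w := by
        rw [Real.sqrt_mul hq2]
        ring
end

section
/- Let X and Y be bounded operators on a complex Hilbert space H and q ∈ ℂ with |q| ≤ 1. Then the q-numerical radius of the 2×2 operator matrix [[X, Y],[Y, X]] on H ⊕ H satisfies max{w_q(X−Y), w_q(X+Y)} ≤ w_q([[X,Y],[Y,X]]) ≤ max{‖X−Y‖, ‖X+Y‖}. -/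
/-- The `2 × 2` block operator matrix `[[Z, X],[Y, W]]` acting on `H ⊕ H`
(the `ℓ²` direct sum `WithLp 2 (H × H)`). -/
noncomputable def block2 {H : Type*} [NormedAddCommGroup H] [InnerProductSpace ℂ H]
    (Z X Y W : H →L[ℂ] H) : WithLp 2 (H × H) →L[ℂ] WithLp 2 (H × H) :=
  (((WithLp.prodContinuousLinearEquiv 2 ℂ H H).symm : (H × H) →L[ℂ] WithLp 2 (H × H)).comp
    ((Z.comp (ContinuousLinearMap.fst ℂ H H) + X.comp (ContinuousLinearMap.snd ℂ H H)).prod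
      (Y.comp (ContinuousLinearMap.fst ℂ H H) + W.comp (ContinuousLinearMap.snd ℂ H H)))).comp
    ((WithLp.prodContinuousLinearEquiv 2 ℂ H H : WithLp 2 (H × H) →L[ℂ] (H × H)))

lemma block2_fst {H : Type*} [NormedAddCommGroup H] [InnerProductSpace ℂ H]
    (Z X Y W : H →L[ℂ] H) (v : WithLp 2 (H × H)) :
    (block2 Z X Y W v).fst = Z v.fst + X v.snd := rfl

lemma block2_snd {H : Type*} [NormedAddCommGroup H] [InnerProductSpace ℂ H]
    (Z X Y W : H →L[ℂ] H) (v : WithLp 2 (H × H)) :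
    (block2 Z X Y W v).snd = Y v.fst + W v.snd := rfl

set_option maxHeartbeats 1600000 in
/-- Every element of the defining set of the `q`-numerical radius of the block matrix is
bounded by `max ‖X - Y‖ ‖X + Y‖`. -/
lemma block_set_bound {H : Type*} [NormedAddCommGroup H] [InnerProductSpace ℂ H]
    (X Y : H →L[ℂ] H) (q : ℂ) (r : ℝ)
    (hr : r ∈ {r : ℝ | ∃ x y : WithLp 2 (H × H), ‖x‖ = 1 ∧ ‖y‖ = 1 ∧ (inner ℂ y x : ℂ) = q ∧
      r = ‖(inner ℂ y (block2 X Y Y X x) : ℂ)‖}) :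
    r ≤ max ‖X - Y‖ ‖X + Y‖ := by
  obtain ⟨x, y, hx, hy, hxy, hrr⟩ := hr
  set a := x.fst with ha
  set b := x.snd with hb
  set c := y.fst with hc
  set d := y.snd with hd
  set M := max ‖X - Y‖ ‖X + Y‖ with hM
  have hM1 : ‖X - Y‖ ≤ M := le_max_left _ _
  have hM2 : ‖X + Y‖ ≤ M := le_max_right _ _
  have hM0 : (0:ℝ) ≤ M := le_trans (norm_nonneg _) hM1
  -- key algebraic identity
  have key : (inner ℂ y (block2 X Y Y X x) : ℂ) =
      (inner ℂ (c - d) ((X - Y) (a - b)) + inner ℂ (c + d) ((X + Y) (a + b))) / 2 := by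
    rw [WithLp.prod_inner_apply]
    change inner ℂ y.fst (block2 X Y Y X x).fst + inner ℂ y.snd (block2 X Y Y X x).snd = _
    rw [block2_fst, block2_snd]
    simp only [ContinuousLinearMap.sub_apply, ContinuousLinearMap.add_apply, map_sub, map_add,
      inner_sub_left, inner_sub_right, inner_add_left, inner_add_right, ← ha, ← hb, ← hc, ← hd]
    ring
  have habs : ‖(inner ℂ y (block2 X Y Y X x) : ℂ)‖ ≤
      (‖c - d‖ * (M * ‖a - b‖) + ‖c + d‖ * (M * ‖a + b‖)) / 2 := by
    rw [key]
    rw [norm_div]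
    simp only [Complex.norm_ofNat]
    gcongr
    calc ‖(inner ℂ (c - d) ((X - Y) (a - b)) : ℂ) + inner ℂ (c + d) ((X + Y) (a + b))‖
        ≤ ‖(inner ℂ (c - d) ((X - Y) (a - b)) : ℂ)‖
          + ‖(inner ℂ (c + d) ((X + Y) (a + b)) : ℂ)‖ := norm_add_le _ _
      _ ≤ ‖c - d‖ * (M * ‖a - b‖) + ‖c + d‖ * (M * ‖a + b‖) := by
          gcongr
          · calc ‖(inner ℂ (c - d) ((X - Y) (a - b)) : ℂ)‖
                ≤ ‖c - d‖ * ‖(X - Y) (a - b)‖ := norm_inner_le_norm _ _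
              _ ≤ ‖c - d‖ * (M * ‖a - b‖) := by
                  gcongr
                  calc ‖(X - Y) (a - b)‖ ≤ ‖X - Y‖ * ‖a - b‖ :=
                        ContinuousLinearMap.le_opNorm _ _
                    _ ≤ M * ‖a - b‖ := by gcongr
          · calc ‖(inner ℂ (c + d) ((X + Y) (a + b)) : ℂ)‖
                ≤ ‖c + d‖ * ‖(X + Y) (a + b)‖ := norm_inner_le_norm _ _
              _ ≤ ‖c + d‖ * (M * ‖a + b‖) := by
                  gcongr
                  calc ‖(X + Y) (a + b)‖ ≤ ‖X + Y‖ * ‖a + b‖ :=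
                        ContinuousLinearMap.le_opNorm _ _
                    _ ≤ M * ‖a + b‖ := by gcongr
  -- parallelogram identities
  have hxsq : ‖a‖ ^ 2 + ‖b‖ ^ 2 = 1 := by
    have := WithLp.prod_norm_sq_eq_of_L2 x
    rw [hx] at this; simpa using this.symm
  have hysq : ‖c‖ ^ 2 + ‖d‖ ^ 2 = 1 := by
    have := WithLp.prod_norm_sq_eq_of_L2 y
    rw [hy] at this; simpa using this.symm
  have hpar1 : ‖a + b‖ * ‖a + b‖ + ‖a - b‖ * ‖a - b‖ = 2 * (‖a‖ * ‖a‖ + ‖b‖ * ‖b‖) :=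
    by have := parallelogram_law_with_norm ℂ a b; simp only [sq] at this; exact this
  have hpar2 : ‖c + d‖ * ‖c + d‖ + ‖c - d‖ * ‖c - d‖ = 2 * (‖c‖ * ‖c‖ + ‖d‖ * ‖d‖) :=
    by have := parallelogram_law_with_norm ℂ c d; simp only [sq] at this; exact this
  -- AM-GM: p*q ≤ (p^2+q^2)/2
  have amgm : ∀ p u : ℝ, p * u ≤ (p ^ 2 + u ^ 2) / 2 := by
    intro p u; nlinarith [sq_nonneg (p - u)]
  have h1 : ‖c - d‖ * ‖a - b‖ ≤ (‖c - d‖ ^ 2 + ‖a - b‖ ^ 2) / 2 := amgm _ _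
  have h2 : ‖c + d‖ * ‖a + b‖ ≤ (‖c + d‖ ^ 2 + ‖a + b‖ ^ 2) / 2 := amgm _ _
  rw [hrr]
  refine le_trans habs ?_
  have hA : ‖a + b‖ ^ 2 + ‖a - b‖ ^ 2 = 2 := by
    simp only [sq] at hxsq ⊢
    rw [hpar1, hxsq]; ring
  have hC : ‖c + d‖ ^ 2 + ‖c - d‖ ^ 2 = 2 := by
    simp only [sq] at hysq ⊢
    rw [hpar2, hysq]; ring
  have hsum : ‖c - d‖ * ‖a - b‖ + ‖c + d‖ * ‖a + b‖ ≤ 2 := by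
    linarith [h1, h2, hA, hC]
  nlinarith [hsum, hM0, norm_nonneg (c - d), norm_nonneg (a - b), norm_nonneg (c + d),
    norm_nonneg (a + b)]

/-- Embedding for the lower bound: from data for `X + ε • Y` produce data for the block. -/
lemma mem_block_set {H : Type*} [NormedAddCommGroup H] [InnerProductSpace ℂ H]
    (X Y : H →L[ℂ] H) (q : ℂ) (ε : ℂ) (hε : ε = 1 ∨ ε = -1) (x y : H)
    (hx : ‖x‖ = 1) (hy : ‖y‖ = 1) (hxy : (inner ℂ y x : ℂ) = q) :
    ∃ x' y' : WithLp 2 (H × H), ‖x'‖ = 1 ∧ ‖y'‖ = 1 ∧ (inner ℂ y' x' : ℂ) = q ∧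
      (inner ℂ y' (block2 X Y Y X x') : ℂ) = inner ℂ y (X x + ε • Y x) := by
  have hεconj : (starRingEnd ℂ) ε = ε := by rcases hε with h | h <;> simp [h]
  have hε2 : ε * ε = 1 := by rcases hε with h | h <;> simp [h]
  set c : ℂ := (((Real.sqrt 2)⁻¹ : ℝ) : ℂ) with hcdef
  have hcconj : (starRingEnd ℂ) c = c := Complex.conj_ofReal _
  have hcc : c * c = 1 / 2 := by
    rw [hcdef, ← Complex.ofReal_mul, ← mul_inv, Real.mul_self_sqrt (by norm_num : (0:ℝ) ≤ 2)]
    norm_num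
  have hnc : ‖c‖ ^ 2 = 1 / 2 := by
    rw [hcdef, Complex.norm_real, Real.norm_eq_abs, sq_abs, sq, ← mul_inv,
      Real.mul_self_sqrt (by norm_num : (0:ℝ) ≤ 2)]
    norm_num
  set x' : WithLp 2 (H × H) := (WithLp.equiv 2 (H × H)).symm (c • x, (ε * c) • x) with hx'
  set y' : WithLp 2 (H × H) := (WithLp.equiv 2 (H × H)).symm (c • y, (ε * c) • y) with hy'
  have hx'fst : x'.fst = c • x := rfl
  have hx'snd : x'.snd = (ε * c) • x := rfl
  have hy'fst : y'.fst = c • y := rfl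
  have hy'snd : y'.snd = (ε * c) • y := rfl
  have hεnorm : ‖ε‖ = 1 := by rcases hε with h | h <;> simp [h]
  have normsq : ∀ z : H, ‖z‖ = 1 →
      ‖(WithLp.equiv 2 (H × H)).symm (c • z, (ε * c) • z)‖ = 1 := by
    intro z hz
    have h2 : ‖(WithLp.equiv 2 (H × H)).symm (c • z, (ε * c) • z)‖ ^ 2 = 1 := by
      rw [WithLp.prod_norm_sq_eq_of_L2]
      have e1 : ((WithLp.equiv 2 (H × H)).symm (c • z, (ε * c) • z)).fst = c • z := rfl
      have e2 : ((WithLp.equiv 2 (H × H)).symm (c • z, (ε * c) • z)).snd = (ε * c) • z := rfl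
      rw [e1, e2, norm_smul, norm_smul, norm_mul, hεnorm, hz, mul_one, mul_one, one_mul]
      rw [hnc]
      norm_num
    rw [← Real.sqrt_one, ← h2, Real.sqrt_sq (norm_nonneg _)]
  have hx'n : ‖x'‖ = 1 := normsq x hx
  have hy'n : ‖y'‖ = 1 := normsq y hy
  refine ⟨x', y', hx'n, hy'n, ?_, ?_⟩
  · rw [WithLp.prod_inner_apply]
    change inner ℂ y'.fst x'.fst + inner ℂ y'.snd x'.snd = q
    rw [hx'fst, hx'snd, hy'fst, hy'snd]
    simp only [inner_smul_left, inner_smul_right, map_mul, hcconj, hεconj, hxy]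
    linear_combination (q + ε * ε * q) * hcc + (q / 2) * hε2
  · rw [WithLp.prod_inner_apply]
    change inner ℂ y'.fst (block2 X Y Y X x').fst + inner ℂ y'.snd (block2 X Y Y X x').snd = _
    rw [block2_fst, block2_snd, hx'fst, hx'snd, hy'fst, hy'snd]
    simp only [map_smul, inner_add_right, inner_smul_left, inner_smul_right, map_mul,
      hcconj, hεconj]
    linear_combination ((inner ℂ y (X x) : ℂ) + ε * ε * (inner ℂ y (X x) : ℂ)
      + 2 * ε * (inner ℂ y (Y x) : ℂ)) * hcc + ((inner ℂ y (X x) : ℂ) / 2) * hε2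

theorem stmt11 {H : Type*} [NormedAddCommGroup H] [InnerProductSpace ℂ H]
    (X Y : H →L[ℂ] H) (q : ℂ) (hq : ‖q‖ ≤ 1) :
    max (qNumRadius q (X - Y)) (qNumRadius q (X + Y)) ≤ qNumRadius q (block2 X Y Y X) ∧
      qNumRadius q (block2 X Y Y X) ≤ max ‖X - Y‖ ‖X + Y‖ := by
  set Sb : Set ℝ := {r : ℝ | ∃ x y : WithLp 2 (H × H), ‖x‖ = 1 ∧ ‖y‖ = 1 ∧
      (inner ℂ y x : ℂ) = q ∧ r = ‖(inner ℂ y (block2 X Y Y X x) : ℂ)‖} with hSb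
  have hbdd : BddAbove Sb := ⟨max ‖X - Y‖ ‖X + Y‖, fun r hr => block_set_bound X Y q r hr⟩
  have hblock_eq : qNumRadius q (block2 X Y Y X) = sSup Sb := rfl
  have hnonneg : (0:ℝ) ≤ qNumRadius q (block2 X Y Y X) := by
    rw [hblock_eq]
    exact Real.sSup_nonneg (by rintro r ⟨x, y, _, _, _, hrr⟩; rw [hrr]; positivity)
  constructor
  · rw [max_le_iff]
    constructor
    · refine Real.sSup_le ?_ hnonneg
      rintro r ⟨x, y, hx, hy, hxy, hrr⟩
      obtain ⟨x', y', hx', hy', hxy', hval⟩ :=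
        mem_block_set X Y q (-1) (Or.inr rfl) x y hx hy hxy
      have hmem : r ∈ Sb := by
        refine ⟨x', y', hx', hy', hxy', ?_⟩
        rw [hval, hrr]
        congr 1
        simp [ContinuousLinearMap.sub_apply, sub_eq_add_neg]
      exact le_csSup hbdd hmem
    · refine Real.sSup_le ?_ hnonneg
      rintro r ⟨x, y, hx, hy, hxy, hrr⟩
      obtain ⟨x', y', hx', hy', hxy', hval⟩ :=
        mem_block_set X Y q 1 (Or.inl rfl) x y hx hy hxy
      have hmem : r ∈ Sb := by
        refine ⟨x', y', hx', hy', hxy', ?_⟩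
        rw [hval, hrr]
        congr 1
        simp [ContinuousLinearMap.add_apply]
      exact le_csSup hbdd hmem
  · refine Real.sSup_le (fun r hr => block_set_bound X Y q r hr) ?_
    exact le_trans (norm_nonneg (X - Y)) (le_max_left _ _)
end

section
/- Let X and Y be bounded operators on a complex Hilbert space H and q ∈ ℂ with |q| ≤ 1. Then (1/2)·max{w_q(X+Y), w_q(X−Y)} ≤ w_q([[0, X],[Y, 0]]) ≤ (1/2)(‖X+Y‖ + ‖X−Y‖), where [[0,X],[Y,0]] denotes the off-diagonal 2×2 operator matrix on H ⊕ H. -/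
section Aux

variable {H : Type*} [NormedAddCommGroup H] [InnerProductSpace ℂ H]

lemma qSet_bdd (q : ℂ) (T : H →L[ℂ] H) :
    ∀ r ∈ {r : ℝ | ∃ x y : H, ‖x‖ = 1 ∧ ‖y‖ = 1 ∧ (inner ℂ y x : ℂ) = q ∧
      r = ‖inner ℂ y (T x)‖}, r ≤ ‖T‖ := by
  rintro r ⟨x, y, hx, hy, -, rfl⟩
  calc ‖inner ℂ y (T x)‖ = ‖(inner ℂ y (T x) : ℂ)‖ := rfl
    _ ≤ ‖y‖ * ‖T x‖ := norm_inner_le_norm _ _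
    _ ≤ ‖T‖ * ‖x‖ := by rw [hy, one_mul]; exact T.le_opNorm x
    _ = ‖T‖ := by rw [hx, mul_one]

lemma abs_le_qNumRadius (q : ℂ) (T : H →L[ℂ] H) {x y : H} (hx : ‖x‖ = 1) (hy : ‖y‖ = 1)
    (hxy : (inner ℂ y x : ℂ) = q) :
    ‖inner ℂ y (T x)‖ ≤ qNumRadius q T :=
  le_csSup ⟨‖T‖, fun r hr => qSet_bdd q T r hr⟩ ⟨x, y, hx, hy, hxy, rfl⟩

lemma conj_mul_self_of_abs_one {ζ : ℂ} (h : ‖ζ‖ = 1) :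
    (starRingEnd ℂ) ζ * ζ = 1 := by
  rw [mul_comm, Complex.mul_conj]; norm_cast
  rw [Complex.normSq_eq_norm_sq, h]; norm_num

/-- Key membership lemma for the lower bound. -/
lemma key_lower (X Y : H →L[ℂ] H) (q ζ : ℂ) (hζ : ‖ζ‖ = 1)
    {x y : H} (hx : ‖x‖ = 1) (hy : ‖y‖ = 1) (hxy : (inner ℂ y x : ℂ) = q) :
    (1 / 2) * ‖ζ * inner ℂ y (X x) + (starRingEnd ℂ) ζ * inner ℂ y (Y x)‖
      ≤ qNumRadius q (block2 0 X Y 0) := by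
  set s : ℝ := (Real.sqrt 2)⁻¹ with hs
  have hs0 : 0 ≤ s := inv_nonneg.2 (Real.sqrt_nonneg 2)
  have hs2 : s ^ 2 = 1 / 2 := by
    rw [hs, inv_pow, Real.sq_sqrt (by norm_num : (0:ℝ) ≤ 2)]
    norm_num
  have hcc : ((s : ℂ)) * (s : ℂ) = 1 / 2 := by
    rw [← Complex.ofReal_mul, ← sq, hs2]; norm_num
  have hzz : (starRingEnd ℂ) ζ * ζ = 1 := conj_mul_self_of_abs_one hζ
  set u : WithLp 2 (H × H) := (WithLp.equiv 2 (H × H)).symm ((s : ℂ) • x, ((s : ℂ) * ζ) • x)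
    with hudef
  set v : WithLp 2 (H × H) := (WithLp.equiv 2 (H × H)).symm ((s : ℂ) • y, ((s : ℂ) * ζ) • y)
    with hvdef
  have hnorm : ∀ z : H, ‖z‖ = 1 →
      ‖(WithLp.equiv 2 (H × H)).symm ((s : ℂ) • z, ((s : ℂ) * ζ) • z)‖ = 1 := by
    intro z hz
    rw [WithLp.prod_norm_eq_of_L2]
    have h1 : ‖(s : ℂ) • z‖ = s := by
      rw [norm_smul, hz, mul_one, Complex.norm_real, Real.norm_eq_abs, abs_of_nonneg hs0]
    have h2 : ‖((s : ℂ) * ζ) • z‖ = s := by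
      rw [norm_smul, hz, mul_one, norm_mul, hζ, mul_one,
        Complex.norm_real, Real.norm_eq_abs, abs_of_nonneg hs0]
    rw [show ((WithLp.equiv 2 (H × H)).symm ((s : ℂ) • z, ((s : ℂ) * ζ) • z)).fst
        = (s : ℂ) • z from rfl,
      show ((WithLp.equiv 2 (H × H)).symm ((s : ℂ) • z, ((s : ℂ) * ζ) • z)).snd
        = ((s : ℂ) * ζ) • z from rfl, h1, h2, hs2]
    norm_num
  have hnu : ‖u‖ = 1 := hnorm x hx
  have hnv : ‖v‖ = 1 := hnorm y hy
  have hvu : (inner ℂ v u : ℂ) = q := by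
    have h0 : (inner ℂ v u : ℂ)
        = inner ℂ ((s : ℂ) • y) ((s : ℂ) • x) + inner ℂ (((s : ℂ) * ζ) • y) (((s : ℂ) * ζ) • x) := rfl
    rw [h0, inner_smul_left, inner_smul_right, inner_smul_left, inner_smul_right, hxy,
      Complex.conj_ofReal, map_mul, Complex.conj_ofReal]
    linear_combination (q + q * ((starRingEnd ℂ) ζ * ζ)) * hcc + (q / 2) * hzz
  have hval : (inner ℂ v (block2 0 X Y 0 u) : ℂ)
      = (1 / 2) * (ζ * inner ℂ y (X x) + (starRingEnd ℂ) ζ * inner ℂ y (Y x)) := by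
    have h0 : (inner ℂ v (block2 0 X Y 0 u) : ℂ)
        = inner ℂ ((s : ℂ) • y) ((0 : H →L[ℂ] H) ((s : ℂ) • x) + X (((s : ℂ) * ζ) • x))
          + inner ℂ (((s : ℂ) * ζ) • y) (Y ((s : ℂ) • x) + (0 : H →L[ℂ] H) (((s : ℂ) * ζ) • x)) :=
      rfl
    rw [h0]
    simp only [ContinuousLinearMap.zero_apply, zero_add, add_zero, map_smul, smul_zero,
      inner_add_right, inner_smul_left, inner_smul_right, Complex.conj_ofReal, map_mul]
    linear_combination (ζ * (inner ℂ y (X x) : ℂ) + (starRingEnd ℂ) ζ * (inner ℂ y (Y x) : ℂ)) * hcc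
  have := abs_le_qNumRadius q (block2 0 X Y 0) hnu hnv hvu
  rw [hval, norm_mul] at this
  have habs : ‖(1 / 2 : ℂ)‖ = 1 / 2 := by norm_num
  rw [habs] at this
  exact this

end Aux

theorem stmt12 {H : Type*} [NormedAddCommGroup H] [InnerProductSpace ℂ H]
    (X Y : H →L[ℂ] H) (q : ℂ) (hq : ‖q‖ ≤ 1) :
    (1 / 2) * max (qNumRadius q (X + Y)) (qNumRadius q (X - Y)) ≤
        qNumRadius q (block2 0 X Y 0) ∧
      qNumRadius q (block2 0 X Y 0) ≤ (1 / 2) * (‖X + Y‖ + ‖X - Y‖) := by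
  constructor
  · have hw0 : 0 ≤ qNumRadius q (block2 0 X Y 0) := by
      apply Real.sSup_nonneg
      rintro r ⟨x, y, -, -, -, rfl⟩
      positivity
    have h1 : qNumRadius q (X + Y) ≤ 2 * qNumRadius q (block2 0 X Y 0) := by
      apply Real.sSup_le _ (by linarith)
      rintro r ⟨x, y, hx, hy, hxy, rfl⟩
      have h := key_lower X Y q 1 (by simp) hx hy hxy
      have hrw : (1 : ℂ) * inner ℂ y (X x) + (starRingEnd ℂ) 1 * inner ℂ y (Y x)
          = inner ℂ y ((X + Y) x) := by
        simp [ContinuousLinearMap.add_apply, inner_add_right]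
      rw [hrw] at h
      linarith
    have h2 : qNumRadius q (X - Y) ≤ 2 * qNumRadius q (block2 0 X Y 0) := by
      apply Real.sSup_le _ (by linarith)
      rintro r ⟨x, y, hx, hy, hxy, rfl⟩
      have h := key_lower X Y q Complex.I (by simp) hx hy hxy
      have hrw : Complex.I * inner ℂ y (X x) + (starRingEnd ℂ) Complex.I * inner ℂ y (Y x)
          = Complex.I * inner ℂ y ((X - Y) x) := by
        simp only [ContinuousLinearMap.sub_apply, inner_sub_right, Complex.conj_I]
        ring
      rw [hrw, norm_mul, Complex.norm_I, one_mul] at h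
      linarith
    have := max_le h1 h2
    linarith
  · apply Real.sSup_le _ (by positivity)
    rintro r ⟨u, v, hu, hv, -, rfl⟩
    have husq : ‖u.fst‖ ^ 2 + ‖u.snd‖ ^ 2 = 1 := by
      have h := WithLp.prod_norm_sq_eq_of_L2 u
      rw [hu] at h
      simpa using h.symm
    have hvsq : ‖v.fst‖ ^ 2 + ‖v.snd‖ ^ 2 = 1 := by
      have h := WithLp.prod_norm_sq_eq_of_L2 v
      rw [hv] at h
      simpa using h.symm
    have hval : (inner ℂ v (block2 0 X Y 0 u) : ℂ) =
        (1 / 2) * ((inner ℂ v.fst ((X + Y) u.snd) + inner ℂ v.snd ((X + Y) u.fst))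
          + (inner ℂ v.fst ((X - Y) u.snd) - inner ℂ v.snd ((X - Y) u.fst))) := by
      have h0 : (inner ℂ v (block2 0 X Y 0 u) : ℂ)
          = inner ℂ v.fst ((0 : H →L[ℂ] H) u.fst + X u.snd)
            + inner ℂ v.snd (Y u.fst + (0 : H →L[ℂ] H) u.snd) := rfl
      rw [h0]
      simp only [ContinuousLinearMap.zero_apply, zero_add, add_zero,
        ContinuousLinearMap.add_apply, ContinuousLinearMap.sub_apply,
        inner_add_right, inner_sub_right]
      ring
    have hb : ∀ (A : H →L[ℂ] H) (a b : H),
        ‖inner ℂ a (A b)‖ ≤ ‖A‖ * (‖a‖ * ‖b‖) := by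
      intro A a b
      calc ‖inner ℂ a (A b)‖ = ‖(inner ℂ a (A b) : ℂ)‖ := rfl
        _ ≤ ‖a‖ * ‖A b‖ := norm_inner_le_norm _ _
        _ ≤ ‖a‖ * (‖A‖ * ‖b‖) := by
            have := A.le_opNorm b
            exact mul_le_mul_of_nonneg_left this (norm_nonneg a)
        _ = ‖A‖ * (‖a‖ * ‖b‖) := by ring
    have hcs : ‖v.fst‖ * ‖u.snd‖ + ‖v.snd‖ * ‖u.fst‖ ≤ 1 := by
      nlinarith [sq_nonneg (‖v.fst‖ - ‖u.snd‖), sq_nonneg (‖v.snd‖ - ‖u.fst‖)]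
    set P := (inner ℂ v.fst ((X + Y) u.snd) : ℂ)
    set Q := (inner ℂ v.snd ((X + Y) u.fst) : ℂ)
    set R := (inner ℂ v.fst ((X - Y) u.snd) : ℂ)
    set S := (inner ℂ v.snd ((X - Y) u.fst) : ℂ)
    have t0 : ‖(P + Q) + (R - S)‖
        ≤ ‖P‖ + ‖Q‖ + ‖R‖ + ‖S‖ := by
      have a1 := norm_add_le (P + Q) (R - S)
      have a2 := norm_add_le P Q
      have a3 : ‖R - S‖ ≤ ‖R‖ + ‖S‖ := by
        simpa [sub_eq_add_neg] using norm_add_le R (-S)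
      linarith
    have b1 := hb (X + Y) v.fst u.snd
    have b2 := hb (X + Y) v.snd u.fst
    have b3 := hb (X - Y) v.fst u.snd
    have b4 := hb (X - Y) v.snd u.fst
    have hcs1 := mul_le_mul_of_nonneg_left hcs (norm_nonneg (X + Y))
    have hcs2 := mul_le_mul_of_nonneg_left hcs (norm_nonneg (X - Y))
    calc ‖inner ℂ v (block2 0 X Y 0 u)‖
        = (1 / 2) * ‖(P + Q) + (R - S)‖ := by
          rw [hval, norm_mul]
          norm_num
      _ ≤ (1 / 2) * (‖P‖ + ‖Q‖ + ‖R‖ + ‖S‖) := by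
          linarith
      _ ≤ (1 / 2) * (‖X + Y‖ + ‖X - Y‖) := by nlinarith
end

section
/- Let X be a bounded operator on a complex Hilbert space H and q ∈ ℂ with |q| ≤ 1. Then w_q([[0, X],[X, 0]]) ≥ (|q|/2)·‖X‖ + (|q|/2)·|‖Re(X)‖ − ‖Im(X)‖|, where Re(X) = (X+X*)/2 and Im(X) = (X−X*)/(2i). -/
/-- The real part `(X + X*)/2` of a bounded operator. -/
noncomputable def reOp {H : Type*} [NormedAddCommGroup H] [InnerProductSpace ℂ H]
    [CompleteSpace H] (X : H →L[ℂ] H) : H →L[ℂ] H :=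
  (2⁻¹ : ℂ) • (X + ContinuousLinearMap.adjoint X)

/-- The imaginary part `(X - X*)/(2i)` of a bounded operator. -/
noncomputable def imOp {H : Type*} [NormedAddCommGroup H] [InnerProductSpace ℂ H]
    [CompleteSpace H] (X : H →L[ℂ] H) : H →L[ℂ] H :=
  (2 * Complex.I)⁻¹ • (X - ContinuousLinearMap.adjoint X)

/-! ### Auxiliary lemmas -/

noncomputable def phase (w : ℂ) : ℂ := if w = 0 then 1 else w / ‖w‖

lemma abs_phase (w : ℂ) : ‖phase w‖ = 1 := by
  unfold phase
  split_ifs with h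
  · simp
  · simp [norm_div, div_self (norm_ne_zero_iff.mpr h)]

lemma conj_phase_mul (w : ℂ) : (starRingEnd ℂ) (phase w) * w = (‖w‖ : ℂ) := by
  unfold phase
  split_ifs with h
  · simp [h]
  · rw [map_div₀, Complex.conj_ofReal]
    have h1 : (‖w‖ : ℂ) ≠ 0 := by simpa using norm_ne_zero_iff.mpr h
    rw [div_mul_eq_mul_div, mul_comm, Complex.mul_conj, Complex.normSq_eq_norm_sq]
    push_cast
    rw [sq, mul_div_assoc, div_self h1, mul_one]

lemma phase_mul_abs (w : ℂ) : phase w * (‖w‖ : ℂ) = w := by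
  unfold phase
  split_ifs with h
  · simp [h]
  · have h1 : (‖w‖ : ℂ) ≠ 0 := by simpa using norm_ne_zero_iff.mpr h
    field_simp

lemma norm_le_of_inner_le {H : Type*} [NormedAddCommGroup H] [InnerProductSpace ℂ H]
    (A : H →L[ℂ] H) (hA : ∀ x y : H, (inner ℂ (A x) y : ℂ) = inner ℂ x (A y))
    {m : ℝ} (hm0 : 0 ≤ m) (hm : ∀ z : H, ‖z‖ = 1 → ‖inner ℂ z (A z)‖ ≤ m) :
    ‖A‖ ≤ m := by
  have hm' : ∀ z : H, ‖inner ℂ z (A z)‖ ≤ m * ‖z‖ ^ 2 := by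
    intro z
    rcases eq_or_ne z 0 with rfl | hz
    · simp
    · have hnz : ‖z‖ ≠ 0 := norm_ne_zero_iff.mpr hz
      set u := (‖z‖ : ℂ)⁻¹ • z with hu
      have hu1 : ‖u‖ = 1 := by
        rw [hu, norm_smul]; simp [hnz]
      have heq : (inner ℂ u (A u) : ℂ)
          = (‖z‖ : ℂ)⁻¹ * (starRingEnd ℂ) ((‖z‖ : ℂ)⁻¹) * inner ℂ z (A z) := by
        rw [hu, map_smul, inner_smul_left, inner_smul_right]; ring
      have habs : ‖inner ℂ u (A u)‖ = (‖z‖⁻¹)^2 * ‖inner ℂ z (A z)‖ := by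
        rw [heq, norm_mul, norm_mul, norm_inv, Complex.norm_conj, norm_inv, Complex.norm_real, Real.norm_eq_abs,
          abs_of_nonneg (norm_nonneg z)]
        ring
      have hb := hm u hu1
      rw [habs] at hb
      have h2 : ‖inner ℂ z (A z)‖
          = ‖z‖^2 * ((‖z‖⁻¹)^2 * ‖inner ℂ z (A z)‖) := by field_simp
      rw [h2]
      calc ‖z‖^2 * ((‖z‖⁻¹)^2 * ‖inner ℂ z (A z)‖) ≤ ‖z‖^2 * m :=
            mul_le_mul_of_nonneg_left hb (by positivity)
        _ = m * ‖z‖^2 := by ring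
  have hre : ∀ x y : H, (inner ℂ y (A x) : ℂ).re ≤ m * (‖x‖ ^ 2 + ‖y‖ ^ 2) / 2 := by
    intro x y
    have hconj : (inner ℂ x (A y) : ℂ) = (starRingEnd ℂ) (inner ℂ y (A x)) := by
      rw [← hA x y, inner_conj_symm]
    have hpol : (inner ℂ (x+y) (A (x+y)) : ℂ) - inner ℂ (x-y) (A (x-y))
        = 4 * ((inner ℂ y (A x) : ℂ).re : ℂ) := by
      have expand : (inner ℂ (x+y) (A (x+y)) : ℂ) - inner ℂ (x-y) (A (x-y))
          = 2 * ((inner ℂ y (A x) : ℂ) + (starRingEnd ℂ) (inner ℂ y (A x))) := by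
        simp only [map_add, map_sub, inner_add_left, inner_add_right, inner_sub_left,
          inner_sub_right, hconj]
        ring
      rw [expand, Complex.add_conj]
      push_cast
      ring
    have h4 : (4:ℝ) * (inner ℂ y (A x) : ℂ).re
        = ((inner ℂ (x+y) (A (x+y)) : ℂ) - inner ℂ (x-y) (A (x-y))).re := by
      rw [hpol]; push_cast; simp
    have hb1 : ((inner ℂ (x+y) (A (x+y)) : ℂ) - inner ℂ (x-y) (A (x-y))).re
        ≤ m * ‖x+y‖^2 + m * ‖x-y‖^2 := by
      rw [Complex.sub_re]
      have e1 : ((inner ℂ (x+y) (A (x+y)) : ℂ)).re ≤ m * ‖x+y‖^2 :=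
        le_trans (Complex.re_le_norm _) (hm' _)
      have e2 : -(m * ‖x-y‖^2) ≤ ((inner ℂ (x-y) (A (x-y)) : ℂ)).re :=
        (abs_le.mp (le_trans (Complex.abs_re_le_norm _) (hm' (x-y)))).1
      linarith
    have hpar : ‖x+y‖^2 + ‖x-y‖^2 = 2*(‖x‖^2 + ‖y‖^2) := by
      have := parallelogram_law_with_norm ℂ x y
      linarith [this]
    nlinarith [hb1, h4]
  have habs : ∀ x y : H, ‖x‖ = 1 → ‖y‖ = 1 → ‖inner ℂ y (A x)‖ ≤ m := by
    intro x y hx hy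
    set w : ℂ := inner ℂ y (A x) with hw
    have : (‖w‖ : ℝ) = (inner ℂ (phase w • y) (A x) : ℂ).re := by
      rw [inner_smul_left, ← hw, conj_phase_mul]
      simp
    rw [this]
    have h3 := hre x (phase w • y)
    have hny : ‖phase w • y‖ = 1 := by
      rw [norm_smul, hy, mul_one, abs_phase]
    rw [hx, hny] at h3
    calc (inner ℂ (phase w • y) (A x) : ℂ).re ≤ m * (1^2 + 1^2)/2 := by
          simpa using h3
      _ = m := by ring
  refine ContinuousLinearMap.opNorm_le_bound A hm0 ?_
  intro x
  rcases eq_or_ne x 0 with rfl | hx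
  · simp
  rcases eq_or_ne (A x) 0 with hAx | hAx
  · rw [hAx]; simp; positivity
  have hnx : ‖x‖ ≠ 0 := norm_ne_zero_iff.mpr hx
  set u := (‖x‖ : ℂ)⁻¹ • x with hu
  have hu1 : ‖u‖ = 1 := by rw [hu, norm_smul]; simp [hnx]
  have hAu : A u = (‖x‖ : ℂ)⁻¹ • A x := by rw [hu, map_smul]
  have hAune : ‖A u‖ ≠ 0 := by
    rw [hAu, norm_smul]
    simp [hnx, hAx]
  set y := (‖A u‖ : ℂ)⁻¹ • A u with hy
  have hy1 : ‖y‖ = 1 := by rw [hy, norm_smul]; simp [hAune]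
  have hval : (inner ℂ y (A u) : ℂ) = (‖A u‖ : ℂ) := by
    rw [hy, inner_smul_left]
    rw [inner_self_eq_norm_sq_to_K]
    have h7 : ((‖A u‖:ℂ))⁻¹ = (starRingEnd ℂ) ((‖A u‖:ℂ))⁻¹ := by
      simp [Complex.conj_ofReal]
    rw [← h7]
    have hc : ((‖A u‖:ℂ)) ≠ 0 := by simpa using hAune
    field_simp
    rfl
  have h8 := habs u y hu1 hy1
  rw [hval] at h8
  have h5 : ‖A u‖ ≤ m := by
    rwa [Complex.norm_real, Real.norm_eq_abs, abs_of_nonneg (norm_nonneg _)] at h8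
  have h6 : ‖A x‖ = ‖x‖ * ‖A u‖ := by
    rw [hAu, norm_smul]
    simp only [norm_inv, Complex.norm_real, norm_norm]
    field_simp
  rw [h6]
  calc ‖x‖ * ‖A u‖ ≤ ‖x‖ * m := mul_le_mul_of_nonneg_left h5 (norm_nonneg x)
    _ = m * ‖x‖ := by ring

lemma exists_unit_inner_ge {H : Type*} [NormedAddCommGroup H] [InnerProductSpace ℂ H]
    [Nontrivial H]
    (A : H →L[ℂ] H) (hA : ∀ x y : H, (inner ℂ (A x) y : ℂ) = inner ℂ x (A y))
    {ε : ℝ} (hε : 0 < ε) :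
    ∃ u : H, ‖u‖ = 1 ∧ ‖A‖ - ε ≤ ‖inner ℂ u (A u)‖ := by
  obtain ⟨v, hv⟩ := exists_ne (0 : H)
  have hnv : ‖v‖ ≠ 0 := norm_ne_zero_iff.mpr hv
  set u₀ := (‖v‖ : ℂ)⁻¹ • v with hu₀
  have hu₀1 : ‖u₀‖ = 1 := by rw [hu₀, norm_smul]; simp [hnv]
  by_contra h
  push_neg at h
  have hc0 : 0 ≤ ‖A‖ - ε := le_of_lt (lt_of_le_of_lt (norm_nonneg _) (h u₀ hu₀1))
  have := norm_le_of_inner_le A hA hc0 (fun z hz => le_of_lt (h z hz))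
  linarith

lemma exists_unit_orth_s16 {K : Type*} [NormedAddCommGroup K] [InnerProductSpace ℂ K]
    {x v : K} (hx : ‖x‖ = 1) (hv : ∀ c : ℂ, v ≠ c • x) :
    ∃ z : K, ‖z‖ = 1 ∧ (inner ℂ z x : ℂ) = 0 ∧ (inner ℂ x z : ℂ) = 0 := by
  set w := v - (inner ℂ x v : ℂ) • x with hw
  have hxx : (inner ℂ x x : ℂ) = 1 := by
    rw [inner_self_eq_norm_sq_to_K, hx]; norm_num
  have hxw : (inner ℂ x w : ℂ) = 0 := by
    rw [hw, inner_sub_right, inner_smul_right, hxx, mul_one, sub_self]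
  have hwne : w ≠ 0 := by
    intro h0
    exact hv (inner ℂ x v : ℂ) (by rwa [hw, sub_eq_zero] at h0)
  have hnw : ‖w‖ ≠ 0 := norm_ne_zero_iff.mpr hwne
  refine ⟨(‖w‖ : ℂ)⁻¹ • w, ?_, ?_, ?_⟩
  · rw [norm_smul]; simp [hnw]
  · rw [inner_smul_left]
    have : (inner ℂ w x : ℂ) = 0 := by
      rw [← inner_conj_symm, hxw, map_zero]
    rw [this, mul_zero]
  · rw [inner_smul_right, hxw, mul_zero]

section OpParts

variable {H : Type*} [NormedAddCommGroup H] [InnerProductSpace ℂ H] [CompleteSpace H]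
  (X : H →L[ℂ] H)

open ContinuousLinearMap

lemma reOp_symm : ∀ x y : H, (inner ℂ (reOp X x) y : ℂ) = inner ℂ x (reOp X y) := by
  intro x y
  simp only [reOp, coe_smul', Pi.smul_apply, add_apply, inner_smul_left, inner_smul_right,
    inner_add_left, inner_add_right, adjoint_inner_left, adjoint_inner_right]
  rw [show (starRingEnd ℂ) 2⁻¹ = 2⁻¹ by rw [map_inv₀, map_ofNat]]
  ring

lemma imOp_symm : ∀ x y : H, (inner ℂ (imOp X x) y : ℂ) = inner ℂ x (imOp X y) := by
  intro x y
  simp only [imOp, coe_smul', Pi.smul_apply, sub_apply, inner_smul_left, inner_smul_right,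
    inner_sub_left, inner_sub_right, adjoint_inner_left, adjoint_inner_right]
  rw [show (starRingEnd ℂ) (2 * Complex.I)⁻¹ = -(2*Complex.I)⁻¹ by
    rw [map_inv₀, map_mul, Complex.conj_I, mul_neg, inv_neg, map_ofNat]]
  ring

lemma X_eq : X = reOp X + Complex.I • imOp X := by
  simp only [reOp, imOp, smul_smul]
  rw [show Complex.I * (2*Complex.I)⁻¹ = 2⁻¹ by
    field_simp [Complex.I_ne_zero]]
  ext v
  simp only [add_apply, smul_apply, coe_smul', Pi.smul_apply, sub_apply]
  module

lemma inner_reOp (u : H) : (inner ℂ u (reOp X u) : ℂ) = ((inner ℂ u (X u) : ℂ).re : ℂ) := by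
  simp only [reOp, coe_smul', Pi.smul_apply, add_apply, inner_smul_right, inner_add_right,
    adjoint_inner_right]
  rw [show (inner ℂ (X u) u : ℂ) = (starRingEnd ℂ) (inner ℂ u (X u)) by rw [inner_conj_symm]]
  rw [Complex.add_conj]
  push_cast
  ring

lemma inner_imOp (u : H) : (inner ℂ u (imOp X u) : ℂ) = ((inner ℂ u (X u) : ℂ).im : ℂ) := by
  simp only [imOp, coe_smul', Pi.smul_apply, sub_apply, inner_smul_right, inner_sub_right,
    adjoint_inner_right]
  rw [show (inner ℂ (X u) u : ℂ) = (starRingEnd ℂ) (inner ℂ u (X u)) by rw [inner_conj_symm]]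
  rw [Complex.sub_conj]
  have : (2 * Complex.I)⁻¹ * (2 * Complex.I * ((inner ℂ u (X u) : ℂ).im : ℂ))
      = ((inner ℂ u (X u) : ℂ).im : ℂ) := by
    field_simp
  rw [← this]
  push_cast
  ring

lemma norm_X_le : ‖X‖ ≤ ‖reOp X‖ + ‖imOp X‖ := by
  calc ‖X‖ = ‖reOp X + Complex.I • imOp X‖ := by rw [← X_eq]
    _ ≤ ‖reOp X‖ + ‖Complex.I • imOp X‖ := norm_add_le _ _
    _ = ‖reOp X‖ + ‖imOp X‖ := by rw [norm_smul]; simp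

lemma block2_fst_s16 (v : WithLp 2 (H × H)) :
    (block2 0 X X 0 v).fst = X v.snd := by
  simp [block2]

lemma block2_snd_s16 (v : WithLp 2 (H × H)) :
    (block2 0 X X 0 v).snd = X v.fst := by
  simp [block2]

end OpParts

set_option maxHeartbeats 1000000 in
theorem stmt16 {H : Type*} [NormedAddCommGroup H] [InnerProductSpace ℂ H] [CompleteSpace H]
    (X : H →L[ℂ] H) (q : ℂ) (hq : ‖q‖ ≤ 1) :
    ‖q‖ / 2 * ‖X‖ + ‖q‖ / 2 * |‖reOp X‖ - ‖imOp X‖| ≤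
      qNumRadius q (block2 0 X X 0) := by
  classical
  set T := block2 0 X X 0 with hT
  set S : Set ℝ := {r : ℝ | ∃ x y : WithLp 2 (H × H), ‖x‖ = 1 ∧ ‖y‖ = 1 ∧
    (inner ℂ y x : ℂ) = q ∧ r = ‖inner ℂ y (T x)‖} with hS
  have hrad : qNumRadius q T = sSup S := rfl
  rcases subsingleton_or_nontrivial H with hH | hH
  · -- trivial space
    have hX : X = 0 := by ext v; exact Subsingleton.elim _ _
    haveI : Subsingleton (WithLp 2 (H × H)) := (WithLp.equiv 2 (H × H)).subsingleton
    have hSe : S = ∅ := by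
      rw [hS]
      ext r
      simp only [Set.mem_setOf_eq, Set.mem_empty_iff_false, iff_false]
      rintro ⟨x, y, hx, -, -, -⟩
      rw [Subsingleton.elim x 0, norm_zero] at hx
      exact one_ne_zero hx.symm
    rw [hrad, hSe, Real.sSup_empty, hX]
    have h1 : reOp (0 : H →L[ℂ] H) = 0 := by simp [reOp]
    have h2 : imOp (0 : H →L[ℂ] H) = 0 := by simp [imOp]
    rw [h1, h2]
    simp
  · -- nontrivial space
    have hbdd : BddAbove S := by
      refine ⟨‖T‖, ?_⟩
      rintro r ⟨x, y, hx, hy, -, rfl⟩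
      calc ‖inner ℂ y (T x)‖ = ‖(inner ℂ y (T x) : ℂ)‖ := rfl
        _ ≤ ‖y‖ * ‖T x‖ := norm_inner_le_norm _ _
        _ = ‖T x‖ := by rw [hy, one_mul]
        _ ≤ ‖T‖ * ‖x‖ := T.le_opNorm x
        _ = ‖T‖ := by rw [hx, mul_one]
    set a := ‖reOp X‖ with ha
    set b := ‖imOp X‖ with hb
    set M := max a b with hM
    have hstep1 : ‖q‖ / 2 * ‖X‖ + ‖q‖ / 2 * |a - b|
        ≤ ‖q‖ * M := by
      have h1 : ‖X‖ ≤ a + b := norm_X_le X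
      have hq0 : 0 ≤ ‖q‖ := norm_nonneg q
      rcases le_total a b with h | h
      · rw [abs_of_nonpos (by linarith), hM, max_eq_right h]
        nlinarith
      · rw [abs_of_nonneg (by linarith), hM, max_eq_left h]
        nlinarith
    refine le_trans hstep1 ?_
    rw [hrad]
    refine le_of_forall_sub_le ?_
    intro ε hε
    -- pick the self-adjoint part with the larger norm
    obtain ⟨A, hAsym, hAnorm, hAle⟩ : ∃ A : H →L[ℂ] H,
        (∀ x y : H, (inner ℂ (A x) y : ℂ) = inner ℂ x (A y)) ∧ ‖A‖ = M ∧
        ∀ u : H, ‖inner ℂ u (A u)‖ ≤ ‖inner ℂ u (X u)‖ := by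
      rcases le_total b a with h | h
      · exact ⟨reOp X, reOp_symm X, by rw [hM, max_eq_left h], fun u => by
          rw [inner_reOp, Complex.norm_real, Real.norm_eq_abs]
          exact Complex.abs_re_le_norm _⟩
      · exact ⟨imOp X, imOp_symm X, by rw [hM, max_eq_right h], fun u => by
          rw [inner_imOp, Complex.norm_real, Real.norm_eq_abs]
          exact Complex.abs_im_le_norm _⟩
    obtain ⟨u, hu1, huA⟩ := exists_unit_inner_ge A hAsym hε
    rw [hAnorm] at huA
    have hV' : M - ε ≤ ‖inner ℂ u (X u)‖ := le_trans huA (hAle u)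
    -- the vector x
    set c₀ : ℂ := (((Real.sqrt 2)⁻¹ : ℝ) : ℂ) with hc₀
    have hc₀sq : (starRingEnd ℂ) c₀ * c₀ = 2⁻¹ := by
      have h9 : ((Real.sqrt 2)⁻¹ : ℝ) * (Real.sqrt 2)⁻¹ = 2⁻¹ := by
        rw [← mul_inv, Real.mul_self_sqrt (by norm_num : (2:ℝ) ≥ 0)]
      rw [hc₀, Complex.conj_ofReal, ← Complex.ofReal_mul, h9]
      norm_num
    have hc₀abs : ‖c₀‖ = (Real.sqrt 2)⁻¹ := by
      rw [hc₀, Complex.norm_real, Real.norm_eq_abs, abs_of_nonneg (by positivity)]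
    set x : WithLp 2 (H × H) := (WithLp.equiv 2 (H × H)).symm (c₀ • u, c₀ • u) with hx
    have hxf : x.fst = c₀ • u := rfl
    have hxs : x.snd = c₀ • u := rfl
    have hnorm_cu : ‖c₀ • u‖ = (Real.sqrt 2)⁻¹ := by
      rw [norm_smul, hu1, mul_one, hc₀abs]
    have hx1 : ‖x‖ = 1 := by
      have hsq : ‖x‖^2 = 1 := by
        rw [WithLp.prod_norm_sq_eq_of_L2 x, hxf, hxs, hnorm_cu]
        rw [inv_pow, Real.sq_sqrt (by norm_num : (0:ℝ) ≤ 2)]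
        norm_num
      rw [← Real.sqrt_sq (norm_nonneg x), hsq, Real.sqrt_one]
    have hVx : (inner ℂ x (T x) : ℂ) = inner ℂ u (X u) := by
      rw [WithLp.prod_inner_apply]
      change inner ℂ x.fst (T x).fst + inner ℂ x.snd (T x).snd = inner ℂ u (X u)
      rw [hT, block2_fst_s16, block2_snd_s16, hxf, hxs]
      simp only [map_smul, inner_smul_left, inner_smul_right]
      rw [show c₀ * ((starRingEnd ℂ) c₀ * (inner ℂ u (X u) : ℂ))
          + c₀ * ((starRingEnd ℂ) c₀ * (inner ℂ u (X u) : ℂ))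
          = 2 * ((starRingEnd ℂ) c₀ * c₀) * (inner ℂ u (X u) : ℂ) by ring, hc₀sq]
      norm_num
    -- orthogonal unit vector
    obtain ⟨e, he⟩ := exists_ne (0 : H)
    have hne : ‖e‖ ≠ 0 := norm_ne_zero_iff.mpr he
    have hcu0 : c₀ • u ≠ 0 := by
      intro h0
      have := congrArg norm h0
      rw [hnorm_cu, norm_zero] at this
      exact (by positivity : (0:ℝ) < (Real.sqrt 2)⁻¹).ne' this
    set v : WithLp 2 (H × H) := (WithLp.equiv 2 (H × H)).symm (e, 0) with hv
    have hvx : ∀ c : ℂ, v ≠ c • x := by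
      intro c hcv
      have h2 : v.snd = (c • x).snd := congrArg WithLp.snd hcv
      have h2' : (0 : H) = c • (c₀ • u) := h2
      have h3 : c = 0 := by
        rcases smul_eq_zero.mp h2'.symm with h | h
        · exact h
        · exact absurd h hcu0
      have h4 : v.fst = (c • x).fst := congrArg WithLp.fst hcv
      have h4' : e = c • (c₀ • u) := h4
      rw [h3, zero_smul] at h4'
      exact he h4'
    obtain ⟨z, hz1, hzx, hxz⟩ := exists_unit_orth_s16 hx1 hvx
    -- construct y
    set s : ℝ := Real.sqrt (1 - (‖q‖)^2) with hs
    have hq2 : (‖q‖)^2 ≤ 1 := by nlinarith [norm_nonneg q]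
    have hs0 : 0 ≤ s := Real.sqrt_nonneg _
    have hs2 : s^2 = 1 - (‖q‖)^2 := Real.sq_sqrt (by linarith)
    set V : ℂ := inner ℂ x (T x) with hVdef
    set B : ℂ := inner ℂ z (T x) with hBdef
    set c : ℂ := (s : ℂ) * (starRingEnd ℂ) (phase (q * V)) * phase B with hc
    have habs_c : ‖c‖ = s := by
      rw [hc, norm_mul, norm_mul, Complex.norm_real, Real.norm_eq_abs, Complex.norm_conj, abs_phase, abs_phase,
        abs_of_nonneg hs0]
      ring
    set y : WithLp 2 (H × H) := (starRingEnd ℂ) q • x + c • z with hy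
    have hxx1 : (inner ℂ x x : ℂ) = 1 := by
      rw [inner_self_eq_norm_sq_to_K, hx1]; norm_num
    have hy1 : ‖y‖ = 1 := by
      have horth : (inner ℂ ((starRingEnd ℂ) q • x) (c • z) : ℂ) = 0 := by
        rw [inner_smul_left, inner_smul_right, hxz, mul_zero, mul_zero]
      have hsq : ‖y‖^2 = 1 := by
        have h := norm_add_sq (𝕜 := ℂ) ((starRingEnd ℂ) q • x) (c • z)
        rw [horth, map_zero] at h
        rw [hy, h, norm_smul, norm_smul, hx1, hz1, mul_one, mul_one]
        simp only [Complex.norm_conj, habs_c]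
        nlinarith
      rw [← Real.sqrt_sq (norm_nonneg y), hsq, Real.sqrt_one]
    have hyx : (inner ℂ y x : ℂ) = q := by
      rw [hy, inner_add_left, inner_smul_left, inner_smul_left, hxx1, hzx,
        Complex.conj_conj, mul_one, mul_zero, add_zero]
    have hyTx : (inner ℂ y (T x) : ℂ) = phase (q * V) *
        ((‖q * V‖ : ℂ) + (s : ℂ) * (‖B‖ : ℂ)) := by
      rw [hy, inner_add_left, inner_smul_left, inner_smul_left, Complex.conj_conj,
        ← hVdef, ← hBdef]
      rw [hc, map_mul, map_mul, Complex.conj_conj, Complex.conj_ofReal]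
      set P : ℂ := phase (q * V) with hP
      set R : ℂ := (‖q * V‖ : ℂ) with hR
      have hqv : q * V = P * R := (phase_mul_abs _).symm
      rw [hqv]
      have hB : (starRingEnd ℂ) (phase B) * B = (‖B‖ : ℂ) := conj_phase_mul B
      linear_combination ((s:ℂ) * P) * hB
    have habs_yTx : ‖inner ℂ y (T x)‖ = ‖q * V‖ + s * ‖B‖ := by
      rw [hyTx, norm_mul, abs_phase, one_mul]
      rw [show ((‖q * V‖ : ℂ) + (s : ℂ) * (‖B‖ : ℂ))
          = ((‖q * V‖ + s * ‖B‖ : ℝ) : ℂ) by push_cast; ring]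
      rw [Complex.norm_real, Real.norm_eq_abs]
      exact abs_of_nonneg (by positivity)
    -- the element of S
    have hmem : ‖inner ℂ y (T x)‖ ∈ S := ⟨x, y, hx1, hy1, hyx, rfl⟩
    have hle := le_csSup hbdd hmem
    have hlower : ‖q‖ * M - ε ≤ ‖inner ℂ y (T x)‖ := by
      rw [habs_yTx, norm_mul]
      have h1 : ‖q‖ * (M - ε) ≤ ‖q‖ * ‖V‖ := by
        refine mul_le_mul_of_nonneg_left ?_ (norm_nonneg q)
        rw [hVx]
        exact hV'
      have h2 : ‖q‖ * ε ≤ ε :=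
        mul_le_of_le_one_left (le_of_lt hε) hq
      nlinarith [mul_nonneg hs0 (norm_nonneg B)]
    linarith
end
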